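/- arXiv:1610.00742 — 5 statements merged into one kernel-verified Lean document; each statement's English description precedes it below -/
import Mathlib

section
/- Let M be a fine monoid (a finitely generated, cancellative commutative monoid, written additively) and let x be a non-invertible element of M. Then the set of integers ρ ≥ 1 such that the class of x in the sharpification M^♯ is divisible by ρ (i.e. equals ρ·m for some m ∈ M^♯) is nonempty and bounded above; in particular it has a largest element. (This makes the root index of any monoid morphism φ : ℕ → M well-defined.) -/
open DirectSum

/-- The class of `x` in the sharpification `M^♯ = M/M^×` is divisible by `k`:
there are `m` in `M` and invertible elements `u, v` with `x + u = k • m + v`. -/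
def SharpDvd {M : Type*} [AddCommMonoid M] (k : ℕ) (x : M) : Prop :=
  ∃ m u v : M, IsAddUnit u ∧ IsAddUnit v ∧ x + u = k • m + v

section Grothendieck

variable (M : Type*) [AddCancelCommMonoid M]

/-- The congruence on `M × M` defining the Grothendieck group. -/
def diagCon : AddCon (M × M) where
  r a b := a.1 + b.2 = b.1 + a.2
  iseqv := by
    refine ⟨fun a => rfl, fun h => h.symm, fun {a b c} h1 h2 => ?_⟩
    have key : (a.1 + c.2) + (b.1 + b.2) = (c.1 + a.2) + (b.1 + b.2) := by
      calc (a.1 + c.2) + (b.1 + b.2) = (a.1 + b.2) + (b.1 + c.2) := by abel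
        _ = (b.1 + a.2) + (c.1 + b.2) := by rw [h1, h2]
        _ = (c.1 + a.2) + (b.1 + b.2) := by abel
    exact add_right_cancel key
  add' := by
    intro a b c d h1 h2
    show (a.1 + c.1) + (b.2 + d.2) = (b.1 + d.1) + (a.2 + c.2)
    calc (a.1 + c.1) + (b.2 + d.2) = (a.1 + b.2) + (c.1 + d.2) := by abel
      _ = (b.1 + a.2) + (d.1 + c.2) := by rw [h1, h2]
      _ = (b.1 + d.1) + (a.2 + c.2) := by abel

/-- The Grothendieck group of `M`. -/
def GGroup := (diagCon M).Quotient

instance : AddCommMonoid (GGroup M) :=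
  inferInstanceAs (AddCommMonoid (diagCon M).Quotient)

variable {M}

/-- Class of a pair in the Grothendieck group. -/
def gmk (p : M × M) : GGroup M := (p : (diagCon M).Quotient)

theorem gmk_add (p q : M × M) : gmk (p + q) = gmk p + gmk q := rfl

theorem gmk_eq_gmk {p q : M × M} : gmk p = gmk q ↔ p.1 + q.2 = q.1 + p.2 :=
  AddCon.eq _

instance : Neg (GGroup M) :=
  ⟨Quotient.map' (fun p => (p.2, p.1)) (by
    intro a b h
    have h' : a.1 + b.2 = b.1 + a.2 := h
    show a.2 + b.1 = b.2 + a.1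
    rw [add_comm, add_comm b.2, h'])⟩

theorem gmk_neg (p : M × M) : -gmk p = gmk (p.2, p.1) := rfl

instance : AddCommGroup (GGroup M) :=
  { (inferInstance : AddCommMonoid (GGroup M)) with
    neg := Neg.neg
    zsmul := zsmulRec
    neg_add_cancel := by
      rintro ⟨⟨a, b⟩⟩
      show -gmk (a, b) + gmk (a, b) = gmk (0, 0)
      rw [gmk_neg, ← gmk_add]
      exact gmk_eq_gmk.2 (by show (b + a) + 0 = 0 + (a + b); abel) }

/-- The canonical map `M →+ GGroup M`. -/
def gi : M →+ GGroup M where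
  toFun a := gmk (a, 0)
  map_zero' := rfl
  map_add' a b := by
    rw [← gmk_add]
    exact gmk_eq_gmk.2 (by simp)

theorem gi_injective : Function.Injective (gi (M := M)) := by
  intro a b h
  have := gmk_eq_gmk.1 h
  simpa using this

theorem gmk_eq_sub (p : M × M) : gmk p = gi p.1 - gi p.2 := by
  rw [sub_eq_add_neg]
  show _ = gmk (p.1, 0) + -gmk (p.2, 0)
  rw [gmk_neg, ← gmk_add]
  exact gmk_eq_gmk.2 (by simp [add_comm])

theorem gmk_surjective : Function.Surjective (gmk (M := M)) := fun g =>
  Quotient.inductionOn' g fun p => ⟨p, rfl⟩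

set_option maxHeartbeats 400000 in
instance [AddMonoid.FG M] : AddGroup.FG (GGroup M) := by
  obtain ⟨S, hS⟩ := AddMonoid.fg_def.mp ‹AddMonoid.FG M›
  rw [AddGroup.fg_iff]
  refine ⟨gi '' (S : Set M), ?_, (S.finite_toSet.image _)⟩
  rw [eq_top_iff]
  rintro g -
  obtain ⟨⟨a, b⟩, rfl⟩ := gmk_surjective g
  have hmem : ∀ m : M, gi m ∈ AddSubgroup.closure (gi '' (S : Set M)) := by
    intro m
    have hm : m ∈ AddSubmonoid.closure (S : Set M) := by rw [hS]; trivial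
    refine AddSubmonoid.closure_induction
      (fun s hs => AddSubgroup.subset_closure ⟨s, hs, rfl⟩)
      (by rw [map_zero]; exact zero_mem _)
      (fun a b _ _ ha hb => by rw [map_add]; exact add_mem ha hb) hm
  rw [gmk_eq_sub]
  exact sub_mem (hmem a) (hmem b)

/-- The subgroup of `GGroup M` generated by units of `M`. -/
def unitsSub : AddSubgroup (GGroup M) where
  carrier := {g | ∃ u v : M, IsAddUnit u ∧ IsAddUnit v ∧ g = gi u - gi v}
  zero_mem' := ⟨0, 0, isAddUnit_zero, isAddUnit_zero, by simp⟩
  add_mem' := by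
    rintro a b ⟨u, v, hu, hv, rfl⟩ ⟨u', v', hu', hv', rfl⟩
    exact ⟨u + u', v + v', hu.add hu', hv.add hv', by rw [map_add, map_add]; abel⟩
  neg_mem' := by
    rintro a ⟨u, v, hu, hv, rfl⟩
    exact ⟨v, u, hv, hu, by abel⟩

end Grothendieck

/-- A f.g. abelian group separates elements of infinite order by maps to `ℤ`. -/
theorem exists_hom_int (G : Type*) [AddCommGroup G] [AddGroup.FG G] (g : G)
    (hg : ∀ n : ℕ, 0 < n → n • g ≠ 0) : ∃ φ : G →+ ℤ, φ g ≠ 0 := by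
  obtain ⟨n, ι, _, p, hp, e, ⟨f⟩⟩ := AddCommGroup.equiv_free_prod_directSum_zmod G
  haveI : ∀ i, NeZero (p i ^ e i) := fun i => ⟨pow_ne_zero _ (hp i).pos.ne'⟩
  haveI : Finite (⨁ i : ι, ZMod (p i ^ e i)) :=
    Finite.of_equiv _ (DFinsupp.equivFunOnFintype (ι := ι)).symm
  by_cases ha : (f g).1 = 0
  · exfalso
    obtain ⟨k, hk, hk0⟩ : ∃ k : ℕ, 0 < k ∧ k • (f g).2 = 0 := by
      exact ⟨addOrderOf (f g).2, (isOfFinAddOrder_of_finite _).addOrderOf_pos,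
        addOrderOf_nsmul_eq_zero _⟩
    refine hg k hk ?_
    apply f.injective
    rw [map_nsmul, map_zero]
    ext1
    · simp only [Prod.smul_fst, Prod.fst_zero, ha, smul_zero]
    · simpa only [Prod.smul_snd, Prod.snd_zero] using hk0
  · obtain ⟨i, hi⟩ : ∃ i, (f g).1 i ≠ 0 := by
      by_contra h
      push_neg at h
      exact ha (Finsupp.ext h)
    exact ⟨((Finsupp.applyAddHom i).comp (AddMonoidHom.fst _ _)).comp f.toAddMonoidHom, hi⟩

theorem rootIndex_aux (M : Type*) [AddCancelCommMonoid M] [AddMonoid.FG M]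
    (x : M) (hx : ¬ IsAddUnit x) :
    ∃ f : M →+ ℤ, f x ≠ 0 ∧ ∀ u : M, IsAddUnit u → f u = 0 := by
  set U : AddSubgroup (GGroup M) := unitsSub
  set Q := GGroup M ⧸ U
  haveI : AddGroup.FG Q := AddGroup.fg_of_surjective (QuotientAddGroup.mk'_surjective U)
  set q : Q := QuotientAddGroup.mk' U (gi x)
  have hq : ∀ n : ℕ, 0 < n → n • q ≠ 0 := by
    intro n hn h
    have h2 : (QuotientAddGroup.mk' U) (n • gi x) = 0 := by rw [map_nsmul]; exact h
    have : (n • gi x : GGroup M) ∈ U := by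
      rw [← QuotientAddGroup.ker_mk' U]; exact h2
    obtain ⟨u, v, hu, hv, huv⟩ := this
    rw [← map_nsmul] at huv
    have hsum : gi (n • x + v) = gi u := by
      rw [map_add, huv]; abel
    have hMeq : n • x + v = u := gi_injective hsum
    have hunit : IsAddUnit (n • x) := by
      obtain ⟨v', hv'⟩ := hv.exists_neg
      have hn' : n • x = u + v' := by
        have h1 : n • x + (v + v') = (n • x + v) + v' := by abel
        rw [hv', add_zero, hMeq] at h1
        exact h1
      rw [hn']
      exact hu.add (IsAddUnit.of_add_eq_zero v (by rw [add_comm]; exact hv'))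
    have : IsAddUnit x := by
      obtain ⟨k, rfl⟩ := Nat.exists_eq_succ_of_ne_zero hn.ne'
      rw [succ_nsmul] at hunit
      exact isAddUnit_of_add_isAddUnit_right hunit
    exact hx this
  obtain ⟨φ, hφ⟩ := exists_hom_int Q q hq
  refine ⟨(φ.comp (QuotientAddGroup.mk' U)).comp gi, hφ, ?_⟩
  intro u hu
  have hker : gi u ∈ (QuotientAddGroup.mk' U).ker := by
    rw [QuotientAddGroup.ker_mk' U]
    exact ⟨u, 0, hu, isAddUnit_zero, by simp⟩
  simp only [AddMonoidHom.comp_apply]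
  rw [AddMonoidHom.mem_ker.1 hker, map_zero]

/-- Let `M` be a fine monoid (finitely generated, cancellative, commutative) and `x` a
non-invertible element of `M`.  Then the set of integers `ρ ≥ 1` such that the class of `x`
in the sharpification `M^♯` is divisible by `ρ` is nonempty and bounded above; in particular
it has a largest element.  (This makes the root index well-defined.) -/
theorem rootIndex_welldefined (M : Type*) [AddCancelCommMonoid M] [AddMonoid.FG M]
    (x : M) (hx : ¬ IsAddUnit x) :
    ({ρ : ℕ | 1 ≤ ρ ∧ SharpDvd ρ x}).Nonempty ∧
    BddAbove {ρ : ℕ | 1 ≤ ρ ∧ SharpDvd ρ x} ∧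
    ∃ g : ℕ, IsGreatest {ρ : ℕ | 1 ≤ ρ ∧ SharpDvd ρ x} g := by
  obtain ⟨f, hfx, hfu⟩ := rootIndex_aux M x hx
  set T := {ρ : ℕ | 1 ≤ ρ ∧ SharpDvd ρ x} with hT
  have hne : T.Nonempty :=
    ⟨1, le_refl 1, x, 0, 0, isAddUnit_zero, isAddUnit_zero, by simp⟩
  have hbdd : BddAbove T := by
    refine ⟨(f x).natAbs, fun ρ hρ => ?_⟩
    obtain ⟨hρ1, m, u, v, hu, hv, heq⟩ := hρ
    have : f x = (ρ : ℤ) * f m := by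
      have := congrArg f heq
      rw [map_add, map_add, hfu u hu, hfu v hv, map_nsmul, add_zero, add_zero,
        nsmul_eq_mul] at this
      exact this
    have hdvd : (ρ : ℤ) ∣ f x := ⟨f m, this⟩
    have : ρ ∣ (f x).natAbs := Int.natAbs_dvd_natAbs.mpr (by simpa using hdvd)
    exact Nat.le_of_dvd (Int.natAbs_pos.mpr hfx) this
  exact ⟨hne, hbdd, sSup T, Nat.sSup_mem hne hbdd, fun y hy => le_csSup hbdd hy⟩
end

section
/- Let M be a fine and saturated monoid and let φ : ℕ → M be a morphism of monoids. Then for every integer d ≥ 1, the amalgamated sum M(d) = M ⊕_ℕ (1/d)ℕ (the pushout in commutative monoids of φ : ℕ → M and the inclusion ℕ ↪ (1/d)ℕ, equivalently of φ and the multiplication-by-d map ℕ → ℕ) is a fine monoid, i.e. it is finitely generated and cancellative. -/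
/-- A cancellative commutative monoid `M` is *saturated* if whenever an element `x` of the
groupification `M^gp` (written as a formal difference `a - b` of elements of `M`) satisfies
`k • x ∈ M` for some `k ≥ 1`, then `x ∈ M`. -/
def IsSaturatedAddMonoid (M : Type*) [AddCommMonoid M] : Prop :=
  ∀ a b : M, ∀ k : ℕ, 1 ≤ k → (∃ c : M, k • a = k • b + c) → ∃ c : M, a = b + c

/-- The congruence on `M ⊕ ℕ` presenting the pushout `M(d) = M ⊕_ℕ (1/d)ℕ` of
`φ : ℕ → M` and the inclusion `ℕ ↪ (1/d)ℕ` (identifying `(1/d)ℕ ≅ ℕ` via `1/d ↦ 1`, so that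
the inclusion becomes multiplication by `d`): it is generated by `(φ(1), 0) ~ (0, d)`. -/
def pushoutCon {M : Type*} [AddCommMonoid M] (φ : ℕ →+ M) (d : ℕ) : AddCon (M × ℕ) :=
  addConGen (fun p q => p = (φ 1, (0 : ℕ)) ∧ q = ((0 : M), d))

/-- The pushout `M(d) = M ⊕_ℕ (1/d)ℕ` in commutative monoids. -/
abbrev MdMonoid {M : Type*} [AddCommMonoid M] (φ : ℕ →+ M) (d : ℕ) :=
  (pushoutCon φ d).Quotient

section Aux

variable {M : Type*} [AddCancelCommMonoid M] (φ : ℕ →+ M) (d : ℕ)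

/-- The explicit description of the pushout congruence. -/
def rCon : AddCon (M × ℕ) where
  r p q := ∃ k l : ℕ, p.1 + φ l = q.1 + φ k ∧ p.2 + k * d = q.2 + l * d
  iseqv := by
    constructor
    · exact fun p => ⟨0, 0, rfl, rfl⟩
    · rintro p q ⟨k, l, h1, h2⟩
      exact ⟨l, k, h1.symm, h2.symm⟩
    · rintro p q s ⟨k, l, h1, h2⟩ ⟨k', l', h3, h4⟩
      refine ⟨k + k', l + l', ?_, by simp only [add_mul] at h2 h4 ⊢; omega⟩
      rw [map_add, map_add, ← add_assoc, ← add_assoc]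
      calc p.1 + φ l + φ l' = q.1 + φ k + φ l' := by rw [h1]
        _ = q.1 + φ l' + φ k := by rw [add_right_comm]
        _ = s.1 + φ k' + φ k := by rw [h3]
        _ = s.1 + φ k + φ k' := by rw [add_right_comm]
  add' := by
    rintro p q p' q' ⟨k, l, h1, h2⟩ ⟨k', l', h3, h4⟩
    refine ⟨k + k', l + l', ?_, by
      simp only [Prod.snd_add, add_mul] at h2 h4 ⊢; omega⟩
    simp only [Prod.fst_add, map_add]
    rw [add_add_add_comm p.1 p'.1, h1, h3, add_add_add_comm]

lemma step (x : M) (y : ℕ) : pushoutCon φ d (x + φ 1, y) (x, y + d) := by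
  have h0 : pushoutCon φ d (φ 1, 0) ((0 : M), d) :=
    AddConGen.Rel.of _ _ ⟨rfl, rfl⟩
  have := (pushoutCon φ d).add h0 ((pushoutCon φ d).refl (x, y))
  simpa [add_comm] using this

lemma steps (j : ℕ) (x : M) (y : ℕ) :
    pushoutCon φ d (x + φ j, y) (x, y + j * d) := by
  induction j generalizing y with
  | zero => simpa using (pushoutCon φ d).refl (x, y)
  | succ j ih =>
      have h1 : pushoutCon φ d (x + φ (j + 1), y) (x + φ j, y + d) := by
        have := step φ d (x + φ j) y
        simpa [map_add, add_assoc] using this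
      have h2 : pushoutCon φ d (x + φ j, y + d) (x, y + d + j * d) := ih (y + d)
      have := (pushoutCon φ d).trans h1 h2
      have hsum : y + d + j * d = y + (j + 1) * d := by ring
      rwa [hsum] at this

lemma pushoutCon_eq_rCon : pushoutCon φ d = rCon φ d := by
  apply le_antisymm
  · apply AddCon.addConGen_le.mpr
    rintro p q ⟨rfl, rfl⟩
    exact ⟨1, 0, by simp, by simp⟩
  · rintro ⟨m, n⟩ ⟨m', n'⟩ ⟨k, l, h1, h2⟩
    dsimp at h1 h2
    rcases le_total l k with h | h
    · have hk : k = l + (k - l) := by omega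
      have hm : m = m' + φ (k - l) := by
        refine add_right_cancel (b := φ l) ?_
        rw [hk, map_add] at h1
        rw [h1]; abel
      have hn : n' = n + (k - l) * d := by
        have h5 : n + (l * d + (k - l) * d) = n' + l * d := by
          rw [← add_mul, ← hk]; exact h2
        omega
      rw [hm, hn]
      exact steps φ d (k - l) m' n
    · have hl : l = k + (l - k) := by omega
      have hm : m' = m + φ (l - k) := by
        refine add_right_cancel (b := φ k) ?_
        rw [hl, map_add] at h1
        rw [← h1]; abel
      have hn : n = n' + (l - k) * d := by
        have h5 : n + k * d = n' + (k * d + (l - k) * d) := by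
          rw [← add_mul, ← hl]; exact h2
        omega
      rw [hm, hn]
      exact (pushoutCon φ d).symm (steps φ d (l - k) m n')

end Aux

/-- Let `M` be a fine and saturated monoid and `φ : ℕ → M` a morphism of monoids.  Then for
every integer `d ≥ 1` the amalgamated sum `M(d) = M ⊕_ℕ (1/d)ℕ` is a fine monoid: it is
finitely generated and cancellative. -/
theorem Md_is_fine (M : Type*) [AddCancelCommMonoid M] [AddMonoid.FG M]
    (hsat : IsSaturatedAddMonoid M) (φ : ℕ →+ M) (d : ℕ) (hd : 1 ≤ d) :
    AddMonoid.FG (MdMonoid φ d) ∧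
      ∀ a b c : MdMonoid φ d, a + b = a + c → b = c := by
  constructor
  · -- finitely generated: quotient of the f.g. monoid `M × ℕ`
    have hprod : AddMonoid.FG (M × ℕ) := by
      obtain ⟨t, ht, htfin⟩ := AddMonoid.fg_iff.mp ‹AddMonoid.FG M›
      rw [AddMonoid.fg_iff]
      refine ⟨(insert (0 : M) t) ×ˢ {0, 1}, ?_,
        (htfin.insert 0).prod ((Set.finite_singleton 1).insert 0)⟩
      rw [AddSubmonoid.closure_prod (Set.mem_insert 0 t) (Set.mem_insert 0 {1})]
      have h1 : AddSubmonoid.closure (insert (0:M) t) = ⊤ := by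
        rw [eq_top_iff, ← ht]
        exact AddSubmonoid.closure_mono (Set.subset_insert _ _)
      have h2 : AddSubmonoid.closure ({0, 1} : Set ℕ) = ⊤ := by
        rw [eq_top_iff]
        intro n _
        induction n with
        | zero => exact zero_mem _
        | succ n ih =>
            exact add_mem (ih trivial) (AddSubmonoid.subset_closure (by simp))
      rw [h1, h2, AddSubmonoid.top_prod_top]
    exact AddMonoid.fg_of_surjective (pushoutCon φ d).mk' (AddCon.mk'_surjective)
  · -- cancellative
    intro a b c h
    obtain ⟨x, rfl⟩ := AddCon.mk'_surjective a
    obtain ⟨y, rfl⟩ := AddCon.mk'_surjective b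
    obtain ⟨z, rfl⟩ := AddCon.mk'_surjective c
    rw [← map_add, ← map_add] at h
    have h' : pushoutCon φ d (x + y) (x + z) := by
      rw [← (pushoutCon φ d).eq]
      simpa [AddCon.coe_mk'] using h
    rw [pushoutCon_eq_rCon] at h'
    obtain ⟨k, l, h1, h2⟩ := h'
    simp only [Prod.fst_add, Prod.snd_add] at h1 h2
    have hr : rCon φ d y z := by
      refine ⟨k, l, ?_, by omega⟩
      have : x.1 + (y.1 + φ l) = x.1 + (z.1 + φ k) := by
        rw [← add_assoc, ← add_assoc]; exact h1
      exact add_left_cancel this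
    have hyz : pushoutCon φ d y z := by rw [pushoutCon_eq_rCon]; exact hr
    have : ((y : MdMonoid φ d)) = z := ((pushoutCon φ d).eq).mpr hyz
    simpa [AddCon.coe_mk'] using this
end

section
/- Let M be a sharp, fine and saturated monoid, let m ∈ M^gp and let n ∈ M ∖ {0}. Let u_1, …, u_r be the generators of the one-dimensional faces of the dual monoid M^∨ = Hom(M, ℕ), and let I ⊆ {1, …, r} be the set of indices i such that u_i(n) > 0. Assume that u_j^gp(m) = 1 for every j ∉ I. Then: (1) u(n) ≥ 1 for every u ∈ M^{∨,loc}; (2) for every integer k ≥ 1, the function u ↦ u^gp(m) is bounded below on the set {u ∈ M^{∨,loc} : u(n) = k}; and (3) for every k ≥ 1 and every j ∈ ℤ, the set {u ∈ M^{∨,loc} : u(n) = k and u^gp(m) = j} is finite. Consequently, the series Σ_{u ∈ M^{∨,loc}} L^{−u^gp(m)} T^{u(n)} is a well-defined element of ℤ((L^{−1}))[[T]] with zero constant term in T. -/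
/-- The congruence on `N × N` presenting the groupification (Grothendieck group) of the
commutative monoid `N`; the pair `(a, b)` represents the formal difference `a - b`. -/
def grpCon (N : Type*) [AddCommMonoid N] : AddCon (N × N) where
  r p q := ∃ k : N, p.1 + q.2 + k = q.1 + p.2 + k
  iseqv := by
    refine ⟨fun p => ⟨0, rfl⟩, ?_, ?_⟩
    · rintro p q ⟨k, h⟩; exact ⟨k, h.symm⟩
    · rintro p q s ⟨k, h⟩ ⟨l, h'⟩
      refine ⟨q.1 + q.2 + k + l, ?_⟩
      calc p.1 + s.2 + (q.1 + q.2 + k + l)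
          = (p.1 + q.2 + k) + (q.1 + s.2 + l) := by abel
        _ = (q.1 + p.2 + k) + (q.1 + s.2 + l) := by rw [h]
        _ = (q.1 + p.2 + k) + (s.1 + q.2 + l) := by rw [h']
        _ = s.1 + p.2 + (q.1 + q.2 + k + l) := by abel
  add' := by
    rintro p q p' q' ⟨k, h⟩ ⟨l, h'⟩
    refine ⟨k + l, ?_⟩
    simp only [Prod.fst_add, Prod.snd_add]
    calc p.1 + p'.1 + (q.2 + q'.2) + (k + l)
        = (p.1 + q.2 + k) + (p'.1 + q'.2 + l) := by abel
      _ = (q.1 + p.2 + k) + (q'.1 + p'.2 + l) := by rw [h, h']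
      _ = q.1 + q'.1 + (p.2 + p'.2) + (k + l) := by abel

/-- The groupification `N^gp` of a commutative monoid `N`. -/
abbrev GrpOf (N : Type*) [AddCommMonoid N] := (grpCon N).Quotient

/-- A morphism of monoids `u : N → ℕ` is *local* if `u(x) ≠ 0` for every non-invertible
element `x` of `N` (for a sharp monoid, for every `x ≠ 0`). -/
def IsLocalAddHom {N : Type*} [AddCommMonoid N] (u : N →+ ℕ) : Prop :=
  ∀ x : N, ¬ IsAddUnit x → u x ≠ 0

/-- A *face* of the dual monoid `M^∨ = Hom(M, ℕ)` is a submonoid `F` such that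
`x + y ∈ F` implies `x ∈ F` and `y ∈ F`. -/
def IsFace {M : Type*} [AddCommMonoid M] (F : AddSubmonoid (M →+ ℕ)) : Prop :=
  ∀ x y : M →+ ℕ, x + y ∈ F → x ∈ F ∧ y ∈ F

/-- A *one-dimensional face* of `M^∨`: a face `F ≠ {0}` whose groupification has rank one,
i.e. any two elements of `F` satisfy a nontrivial relation `a • x = b • y`. -/
def IsOneDimFace {M : Type*} [AddCommMonoid M] (F : AddSubmonoid (M →+ ℕ)) : Prop :=
  IsFace F ∧ F ≠ ⊥ ∧
    ∀ x ∈ F, ∀ y ∈ F, ∃ a b : ℕ, ¬(a = 0 ∧ b = 0) ∧ a • x = b • y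

/-- The coefficient ring `ℤ((L⁻¹))` of formal Laurent series in `L⁻¹`: a Laurent series in
the variable `X = L⁻¹`.  The exponent `a ∈ ℤ` of `X` corresponds to the monomial `L^{-a}`. -/
abbrev RL : Type := LaurentSeries ℤ

/-- The element `L` of `ℤ((L⁻¹))`, i.e. `X⁻¹` where `X = L⁻¹`. -/
noncomputable def Lvar : RL := HahnSeries.single (-1 : ℤ) (1 : ℤ)

/-- The element `L⁻¹` of `ℤ((L⁻¹))`. -/
noncomputable def Lvarinv : RL := HahnSeries.single (1 : ℤ) (1 : ℤ)

/-- The monomial `L^{-a} T^b` in the ring `ℤ((L⁻¹))[[T]]`. -/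
noncomputable def LTmonomial (a : ℤ) (b : ℕ) : PowerSeries RL :=
  (PowerSeries.monomial b) (HahnSeries.single a (1 : ℤ))

/-- The set of local morphisms `u : M → ℕ` with `u(n) = b` and `u^gp(m) = a`, where the
element `m` of `M^gp` is written as the formal difference `m = m₁ - m₂` with `m₁, m₂ ∈ M`
(so that `u^gp(m) = u(m₁) - u(m₂)`). -/
def localLevelSet {M : Type*} [AddCommMonoid M] (m₁ m₂ n : M) (b : ℕ) (a : ℤ) :
    Set (M →+ ℕ) :=
  {u | IsLocalAddHom u ∧ u n = b ∧ (u m₁ : ℤ) - (u m₂ : ℤ) = a}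

/-- `G ∈ ℤ((L⁻¹))[[T]]` is the series `Σ_{u ∈ M^{∨,loc}} L^{-u^gp(m)} T^{u(n)}`: for all
`b` and `a`, only finitely many local `u` satisfy `u(n) = b`, `u^gp(m) = a`, and the
coefficient of `L^{-a} T^b` in `G` is the number of such `u`. -/
def IsLocalDualSeries {M : Type*} [AddCommMonoid M] (m₁ m₂ n : M)
    (G : PowerSeries RL) : Prop :=
  ∀ b : ℕ, ∀ a : ℤ, (localLevelSet m₁ m₂ n b a).Finite ∧
    ((PowerSeries.coeff b) G).coeff a = (Nat.card (localLevelSet m₁ m₂ n b a) : ℤ)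

section SeriesAux

open AddSubmonoid Finset

variable {M : Type*} [AddCommMonoid M]

private lemma smul_apply' (a : ℕ) (f : M →+ ℕ) (x : M) : (a • f) x = a * f x := by
  induction a with
  | zero => simp
  | succ a ih => rw [succ_nsmul, AddMonoidHom.add_apply, ih, Nat.succ_mul]

private lemma hom_eq_on (S : Finset M) (hS : closure (S : Set M) = ⊤)
    {v w : M →+ ℕ} (h : ∀ g ∈ S, v g = w g) : v = w :=
  AddMonoidHom.eq_of_eqOn_denseM hS (fun g hg => h g hg)

private lemma hom_zero_of (S : Finset M) (hS : closure (S : Set M) = ⊤)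
    {v : M →+ ℕ} (h : ∀ g ∈ S, v g = 0) : v = 0 :=
  hom_eq_on S hS (by simpa using h)

private lemma sub_hom (S : Finset M) (hS : closure (S : Set M) = ⊤)
    (v w : M →+ ℕ) (p q : ℕ) (h : ∀ g ∈ S, p * w g ≤ q * v g) :
    ∃ z : M →+ ℕ, ∀ x : M, q * v x = p * w x + z x := by
  have hall : ∀ x : M, p * w x ≤ q * v x := by
    intro x
    let P : AddSubmonoid M :=
      { carrier := {x | p * w x ≤ q * v x}
        zero_mem' := by simp
        add_mem' := by
          intro a b ha hb
          simp only [Set.mem_setOf_eq, map_add, mul_add] at *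
          omega }
    have hle : closure (S : Set M) ≤ P := closure_le.2 (fun g hg => h g hg)
    exact hle (by rw [hS]; trivial)
  refine ⟨{ toFun := fun x => q * v x - p * w x
            map_zero' := by simp
            map_add' := by
              intro a b
              have h1 := hall a
              have h2 := hall b
              simp only [map_add, mul_add]
              omega }, ?_⟩
  intro x
  have := hall x
  simp only [AddMonoidHom.coe_mk, ZeroHom.coe_mk]
  omega

/-- Every `v : M →+ ℕ` has a positive multiple which is an `ℕ`-combination of the
generators `u i` of the one-dimensional faces of the dual monoid. -/
private lemma dual_decomp (S : Finset M) (hS : closure (S : Set M) = ⊤) {r : ℕ}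
    (u : Fin r → (M →+ ℕ))
    (hfaces : ∀ F : AddSubmonoid (M →+ ℕ),
      IsOneDimFace F ↔ ∃ i : Fin r, F = AddSubmonoid.multiples (u i))
    (v : M →+ ℕ) :
    ∃ N : ℕ, 0 < N ∧ ∃ c : Fin r → ℕ, ∀ x : M, N * v x = ∑ i, c i * u i x := by
  classical
  have base : ∀ v : M →+ ℕ, (∀ g ∈ S, v g = 0) →
      ∃ N : ℕ, 0 < N ∧ ∃ c : Fin r → ℕ, ∀ x : M, N * v x = ∑ i, c i * u i x := by
    intro v hv0
    have hv : v = 0 := hom_zero_of S hS hv0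
    exact ⟨1, one_pos, 0, fun x => by simp [hv]⟩
  suffices H : ∀ k : ℕ, ∀ v : M →+ ℕ, (S.filter (fun g => v g ≠ 0)).card ≤ k →
      ∃ N : ℕ, 0 < N ∧ ∃ c : Fin r → ℕ, ∀ x : M, N * v x = ∑ i, c i * u i x by
    exact H _ v le_rfl
  intro k
  induction k with
  | zero =>
    intro v hv
    refine base v (fun g hg => ?_)
    by_contra hne
    have : g ∈ S.filter (fun g => v g ≠ 0) := mem_filter.2 ⟨hg, hne⟩
    have : (S.filter (fun g => v g ≠ 0)).Nonempty := ⟨g, this⟩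
    have := card_pos.2 this
    omega
  | succ k IH =>
    intro v hv
    by_cases h0 : ∀ g ∈ S, v g = 0
    · exact base v h0
    push_neg at h0
    obtain ⟨gs, hgsS, hgsne⟩ := h0
    -- the face of the dual monoid determined by the support of v
    set F : AddSubmonoid (M →+ ℕ) :=
      { carrier := {w : M →+ ℕ | ∀ g ∈ S, v g = 0 → w g = 0}
        zero_mem' := fun g _ _ => rfl
        add_mem' := by
          intro a b ha hb g hg hvg
          have h1 := ha g hg hvg
          have h2 := hb g hg hvg
          simp [AddMonoidHom.add_apply, h1, h2] } with hFdef
    have hmemF : ∀ w : M →+ ℕ, w ∈ F ↔ ∀ g ∈ S, v g = 0 → w g = 0 := fun w => Iff.rfl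
    have hvF : v ∈ F := fun g _ h => h
    have hvne : v ≠ 0 := by
      intro h
      exact hgsne (by rw [h]; rfl)
    by_cases hA : ∀ x ∈ F, ∀ y ∈ F, ∃ a b : ℕ, ¬(a = 0 ∧ b = 0) ∧ a • x = b • y
    · -- one-dimensional case: F is one of the given faces
      have hface : IsOneDimFace F := by
        refine ⟨?_, ?_, hA⟩
        · intro x y hxy
          constructor
          · intro g hg hvg
            have := hxy g hg hvg
            simp only [AddMonoidHom.add_apply] at this
            omega
          · intro g hg hvg
            have := hxy g hg hvg
            simp only [AddMonoidHom.add_apply] at this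
            omega
        · intro hbot
          rw [hbot] at hvF
          exact hvne (AddSubmonoid.mem_bot.1 hvF)
      obtain ⟨i, hFi⟩ := (hfaces F).1 hface
      have hvmul : v ∈ AddSubmonoid.multiples (u i) := by rw [← hFi]; exact hvF
      obtain ⟨c0, hc0⟩ := (AddSubmonoid.mem_multiples_iff _ _).1 hvmul
      refine ⟨1, one_pos, fun i' => if i' = i then c0 else 0, fun x => ?_⟩
      have hx : c0 * u i x = v x := by
        rw [← smul_apply' c0 (u i) x, hc0]
      have hstep : (∑ i', (if i' = i then c0 else 0) * u i' x)
          = ∑ i', (if i' = i then c0 * u i' x else 0) := by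
        refine Finset.sum_congr rfl (fun i' _ => ?_)
        split <;> simp
      rw [one_mul, hstep, Finset.sum_ite_eq' Finset.univ i (fun i' => c0 * u i' x)]
      simp [hx]
    · -- there exist two independent elements of F
      push_neg at hA
      obtain ⟨x, hxF, y, hyF, hind0⟩ := hA
      have hind : ∀ a b : ℕ, a • x = b • y → a = 0 ∧ b = 0 := by
        intro a b hab
        by_contra hne
        exact hind0 a b (fun h1 h2 => hne ⟨h1, h2⟩) hab
      have hyne : y ≠ 0 := by
        intro h
        have := hind 0 1 (by rw [h]; simp)
        exact one_ne_zero this.2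
      -- produce w ∈ F with no nontrivial relation with v
      have hwex : ∃ w : M →+ ℕ, w ∈ F ∧ ∀ a b : ℕ, a • w = b • v → a = 0 ∧ b = 0 := by
        by_cases hxv : ∀ a b : ℕ, a • x = b • v → a = 0 ∧ b = 0
        · exact ⟨x, hxF, hxv⟩
        · simp only [not_forall, Classical.not_imp] at hxv
          obtain ⟨a, b, hab, habne⟩ := hxv
          have ha : a ≠ 0 := by
            rintro rfl
            have h2 : (0 : ℕ) * x gs = b * v gs := by
              rw [← smul_apply', ← smul_apply', hab]
            simp only [Nat.zero_mul] at h2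
            have hb : b ≠ 0 := fun h => habne ⟨rfl, h⟩
            have : v gs = 0 := by
              rcases Nat.mul_eq_zero.1 h2.symm with h | h
              · exact absurd h hb
              · exact h
            exact hgsne this
          refine ⟨y, hyF, fun a' b' h' => ?_⟩
          -- derive a relation between x and y
          have hrel : (b' * a) • x = (b * a') • y := by
            calc (b' * a) • x = b' • (a • x) := mul_smul _ _ _
              _ = b' • (b • v) := by rw [hab]
              _ = (b' * b) • v := (mul_smul _ _ _).symm
              _ = (b * b') • v := by rw [Nat.mul_comm]
              _ = b • (b' • v) := mul_smul _ _ _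
              _ = b • (a' • y) := by rw [← h']
              _ = (b * a') • y := (mul_smul _ _ _).symm
          obtain ⟨h1, h2⟩ := hind _ _ hrel
          have hb' : b' = 0 := by
            rcases Nat.mul_eq_zero.1 h1 with h | h
            · exact h
            · exact absurd h ha
          refine ⟨?_, hb'⟩
          -- a' • y = 0 and y ≠ 0
          have hy0 : a' • y = 0 := by
            rw [h', hb', zero_smul]
          obtain ⟨t, ht⟩ : ∃ t : M, y t ≠ 0 := by
            by_contra hco
            push_neg at hco
            exact hyne (AddMonoidHom.ext (fun t => by simp [hco t]))
          have : a' * y t = 0 := by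
            rw [← smul_apply', hy0]; rfl
          rcases Nat.mul_eq_zero.1 this with h | h
          · exact h
          · exact absurd h ht
      obtain ⟨w, hwF, hw⟩ := hwex
      have hwne : w ≠ 0 := by
        intro h
        have := hw 1 0 (by rw [h]; simp)
        exact one_ne_zero this.1
      -- w is nonzero on some generator
      obtain ⟨gw, hgwS, hgwne⟩ : ∃ g ∈ S, w g ≠ 0 := by
        by_contra hco
        push_neg at hco
        exact hwne (hom_zero_of S hS hco)
      -- minimize v g / w g over the support of w
      have hTwne : (S.filter (fun g => w g ≠ 0)).Nonempty :=
        ⟨gw, mem_filter.2 ⟨hgwS, hgwne⟩⟩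
      obtain ⟨g₀, hg₀, hmin⟩ :=
        (S.filter (fun g => w g ≠ 0)).exists_min_image
          (fun g => (v g : ℚ) / (w g : ℚ)) hTwne
      have hg₀S : g₀ ∈ S := (mem_filter.1 hg₀).1
      have hwg₀ : w g₀ ≠ 0 := (mem_filter.1 hg₀).2
      have hvg₀ : v g₀ ≠ 0 := by
        intro h
        exact hwg₀ (hwF g₀ hg₀S h)
      have h1 : ∀ g ∈ S, v g₀ * w g ≤ w g₀ * v g := by
        intro g hg
        by_cases hwg : w g = 0
        · simp [hwg]
        · have hgTw : g ∈ S.filter (fun g => w g ≠ 0) := mem_filter.2 ⟨hg, hwg⟩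
          have hq := hmin g hgTw
          rw [div_le_div_iff₀ (by positivity) (by positivity)] at hq
          have hnat : v g₀ * w g ≤ v g * w g₀ := by exact_mod_cast hq
          calc v g₀ * w g ≤ v g * w g₀ := hnat
            _ = w g₀ * v g := Nat.mul_comm _ _
      obtain ⟨z, e1⟩ := sub_hom S hS v w (v g₀) (w g₀) h1
      have hz1 : ∀ g ∈ S, v g = 0 → z g = 0 := by
        intro g hg hvg
        have hwg : w g = 0 := hwF g hg hvg
        have := e1 g
        rw [hvg, hwg] at this
        omega
      have hz2 : z g₀ = 0 := by
        have h := e1 g₀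
        rw [Nat.mul_comm (w g₀) (v g₀)] at h
        exact left_eq_add.1 h
      have hcard : (S.filter (fun g => z g ≠ 0)).card ≤ k := by
        have hsub : S.filter (fun g => z g ≠ 0) ⊆ (S.filter (fun g => v g ≠ 0)).erase g₀ := by
          intro g hgmem
          obtain ⟨hgS, hgz⟩ := mem_filter.1 hgmem
          refine Finset.mem_erase.2 ⟨?_, mem_filter.2 ⟨hgS, ?_⟩⟩
          · intro h; exact hgz (h ▸ hz2)
          · intro h; exact hgz (hz1 g hgS h)
        have h2 := Finset.card_le_card hsub
        have h3 : g₀ ∈ S.filter (fun g => v g ≠ 0) := mem_filter.2 ⟨hg₀S, hvg₀⟩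
        rw [Finset.card_erase_of_mem h3] at h2
        have h4 := card_pos.2 ⟨g₀, h3⟩
        omega
      -- symmetric step: minimize w g / v g over the support of v
      have hTvne : (S.filter (fun g => v g ≠ 0)).Nonempty :=
        ⟨gs, mem_filter.2 ⟨hgsS, hgsne⟩⟩
      obtain ⟨g₁, hg₁, hmin'⟩ :=
        (S.filter (fun g => v g ≠ 0)).exists_min_image
          (fun g => (w g : ℚ) / (v g : ℚ)) hTvne
      have hg₁S : g₁ ∈ S := (mem_filter.1 hg₁).1
      have hvg₁ : v g₁ ≠ 0 := (mem_filter.1 hg₁).2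
      have h2 : ∀ g ∈ S, w g₁ * v g ≤ v g₁ * w g := by
        intro g hg
        by_cases hvg : v g = 0
        · simp [hvg]
        · have hgTv : g ∈ S.filter (fun g => v g ≠ 0) := mem_filter.2 ⟨hg, hvg⟩
          have hq := hmin' g hgTv
          rw [div_le_div_iff₀ (by positivity) (by positivity)] at hq
          have hnat : w g₁ * v g ≤ w g * v g₁ := by exact_mod_cast hq
          calc w g₁ * v g ≤ w g * v g₁ := hnat
            _ = v g₁ * w g := Nat.mul_comm _ _
      obtain ⟨z', e2⟩ := sub_hom S hS w v (w g₁) (v g₁) h2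
      have hz'1 : ∀ g ∈ S, v g = 0 → z' g = 0 := by
        intro g hg hvg
        have hwg : w g = 0 := hwF g hg hvg
        have := e2 g
        rw [hvg, hwg] at this
        omega
      have hz'2 : z' g₁ = 0 := by
        have h := e2 g₁
        rw [Nat.mul_comm (v g₁) (w g₁)] at h
        exact left_eq_add.1 h
      have hcard' : (S.filter (fun g => z' g ≠ 0)).card ≤ k := by
        have hsub : S.filter (fun g => z' g ≠ 0) ⊆ (S.filter (fun g => v g ≠ 0)).erase g₁ := by
          intro g hgmem
          obtain ⟨hgS, hgz⟩ := mem_filter.1 hgmem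
          refine Finset.mem_erase.2 ⟨?_, mem_filter.2 ⟨hgS, ?_⟩⟩
          · intro h; exact hgz (h ▸ hz'2)
          · intro h; exact hgz (hz'1 g hgS h)
        have h2' := Finset.card_le_card hsub
        have h3 : g₁ ∈ S.filter (fun g => v g ≠ 0) := mem_filter.2 ⟨hg₁S, hvg₁⟩
        rw [Finset.card_erase_of_mem h3] at h2'
        have h4 := card_pos.2 ⟨g₁, h3⟩
        omega
      set p := v g₀ with hp
      set q := w g₀ with hqq
      set p' := w g₁ with hp'
      set q' := v g₁ with hq'
      have key : ∀ x : M, q * q' * v x = p * p' * v x + (p * z' x + q' * z x) := by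
        intro x
        have e1x := e1 x
        have e2x := e2 x
        calc q * q' * v x = q' * (q * v x) := by ring
          _ = q' * (p * w x + z x) := by rw [e1x]
          _ = p * (q' * w x) + q' * z x := by ring
          _ = p * (p' * v x + z' x) + q' * z x := by rw [e2x]
          _ = p * p' * v x + (p * z' x + q' * z x) := by ring
      have hlt : p * p' < q * q' := by
        by_contra hle
        push_neg at hle
        have hz0 : ∀ g ∈ S, z g = 0 := by
          intro g hg
          have hk := key g
          have hmul : q * q' * v g ≤ p * p' * v g := Nat.mul_le_mul_right _ hle
          have h5 : p * z' g + q' * z g = 0 := Nat.le_zero.1 (by linarith)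
          have h6 : q' * z g = 0 := by omega
          rcases Nat.mul_eq_zero.1 h6 with h | h
          · exact absurd h hvg₁
          · exact h
        have hz : z = 0 := hom_zero_of S hS hz0
        have hrel : p • w = q • v := by
          refine AddMonoidHom.ext (fun x => ?_)
          have := e1 x
          rw [hz] at this
          simp only [AddMonoidHom.zero_apply, Nat.add_zero] at this
          rw [smul_apply', smul_apply']
          omega
        exact hwg₀ (hw p q hrel).2
      set D := q * q' - p * p' with hD
      have hDpos : 0 < D := by omega
      have hDx : ∀ x : M, D * v x = p * z' x + q' * z x := by
        intro x
        have h8 : D * v x + p * p' * v x = q * q' * v x := by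
          rw [← Nat.add_mul, hD, Nat.sub_add_cancel (le_of_lt hlt)]
        have h9 := key x
        linarith
      obtain ⟨N, hN, c, hc⟩ := IH z hcard
      obtain ⟨N', hN', c', hc'⟩ := IH z' hcard'
      refine ⟨D * (N * N'), by positivity, fun i => p * N * c' i + q' * N' * c i, fun x => ?_⟩
      calc (D * (N * N')) * v x = (N * N') * (D * v x) := by ring
        _ = (N * N') * (p * z' x + q' * z x) := by rw [hDx x]
        _ = (p * N) * (N' * z' x) + (q' * N') * (N * z x) := by ring
        _ = (p * N) * (∑ i, c' i * u i x) + (q' * N') * (∑ i, c i * u i x) := by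
            rw [hc' x, hc x]
        _ = ∑ i, (p * N * c' i + q' * N' * c i) * u i x := by
            rw [Finset.mul_sum, Finset.mul_sum, ← Finset.sum_add_distrib]
            refine Finset.sum_congr rfl (fun i _ => ?_)
            ring

/-- The key bounds extracted from a decomposition of `v` in terms of the `u i`. -/
private lemma core_bounds {r : ℕ} (u : Fin r → (M →+ ℕ))
    (m₁ m₂ n : M) (hm : ∀ j : Fin r, u j n = 0 → (u j m₁ : ℤ) - (u j m₂ : ℤ) = 1)
    (v : M →+ ℕ) (N : ℕ) (hN : 0 < N) (c : Fin r → ℕ)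
    (hc : ∀ x : M, N * v x = ∑ i, c i * u i x) :
    -((v n : ℤ) * ∑ i, (u i m₂ : ℤ)) ≤ (v m₁ : ℤ) - (v m₂ : ℤ) ∧
      ∀ g : M, (v g : ℤ) ≤
        ((v n : ℤ) + ((v m₁ : ℤ) - (v m₂ : ℤ)) + (v n : ℤ) * ∑ i, (u i m₂ : ℤ))
          * ∑ i, (u i g : ℤ) := by
  have hcast : ∀ x : M, (N : ℤ) * (v x : ℤ) = ∑ i, (c i : ℤ) * (u i x : ℤ) := by
    intro x
    exact_mod_cast hc x
  set C : ℤ := ∑ i, (u i m₂ : ℤ) with hCdef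
  have hNpos : (0 : ℤ) < (N : ℤ) := by exact_mod_cast hN
  have TB : ∀ i : Fin r,
      -(((N : ℤ) * (v n : ℤ)) * (u i m₂ : ℤ)) ≤ (c i : ℤ) * ((u i m₁ : ℤ) - (u i m₂ : ℤ)) := by
    intro i
    have h1 : (c i : ℤ) * (u i n : ℤ) ≤ (N : ℤ) * (v n : ℤ) := by
      rw [hcast n]
      exact Finset.single_le_sum (f := fun j : Fin r => (c j : ℤ) * (u j n : ℤ))
        (fun j _ => by positivity) (Finset.mem_univ i)
    by_cases hin : u i n = 0
    · rw [hm i hin]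
      have h2 : (0 : ℤ) ≤ ((N : ℤ) * (v n : ℤ)) * (u i m₂ : ℤ) := by positivity
      have h3 : (0 : ℤ) ≤ (c i : ℤ) := by positivity
      linarith
    · have hin1 : (1 : ℤ) ≤ (u i n : ℤ) := by
        exact_mod_cast Nat.one_le_iff_ne_zero.2 hin
      have hc1 : (c i : ℤ) ≤ (N : ℤ) * (v n : ℤ) :=
        le_trans (le_mul_of_one_le_right (by positivity) hin1) h1
      have h4 := mul_le_mul_of_nonneg_right hc1 (show (0 : ℤ) ≤ (u i m₂ : ℤ) by positivity)
      have h5 : (0 : ℤ) ≤ (c i : ℤ) * (u i m₁ : ℤ) := by positivity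
      nlinarith
  have e : ∑ i, (c i : ℤ) * ((u i m₁ : ℤ) - (u i m₂ : ℤ))
      = (N : ℤ) * ((v m₁ : ℤ) - (v m₂ : ℤ)) := by
    have h6 : ∀ i ∈ Finset.univ (α := Fin r),
        (c i : ℤ) * ((u i m₁ : ℤ) - (u i m₂ : ℤ))
          = (c i : ℤ) * (u i m₁ : ℤ) - (c i : ℤ) * (u i m₂ : ℤ) :=
      fun i _ => mul_sub _ _ _
    rw [Finset.sum_congr rfl h6, Finset.sum_sub_distrib, ← hcast m₁, ← hcast m₂]
    ring
  have e2 : ∑ i, ((N : ℤ) * (v n : ℤ)) * (u i m₂ : ℤ) = ((N : ℤ) * (v n : ℤ)) * C := by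
    rw [hCdef, Finset.mul_sum]
  have hsum0 : 0 ≤ (N : ℤ) * ((v m₁ : ℤ) - (v m₂ : ℤ)) + ((N : ℤ) * (v n : ℤ)) * C := by
    have h7 := Finset.sum_nonneg (s := Finset.univ)
      (f := fun i : Fin r => (c i : ℤ) * ((u i m₁ : ℤ) - (u i m₂ : ℤ))
        + ((N : ℤ) * (v n : ℤ)) * (u i m₂ : ℤ))
      (fun i _ => by
        show (0:ℤ) ≤ (c i : ℤ) * ((u i m₁ : ℤ) - (u i m₂ : ℤ))
          + ((N : ℤ) * (v n : ℤ)) * (u i m₂ : ℤ)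
        linarith [TB i])
    rw [Finset.sum_add_distrib, e, e2] at h7
    linarith
  constructor
  · by_contra hcon
    push_neg at hcon
    have hX : ((v m₁ : ℤ) - (v m₂ : ℤ)) + (v n : ℤ) * C < 0 := by linarith
    have := mul_neg_of_pos_of_neg hNpos hX
    nlinarith
  · intro g
    have up : ∀ j : Fin r, (c j : ℤ) * ((u j m₁ : ℤ) - (u j m₂ : ℤ))
        ≤ (N : ℤ) * ((v m₁ : ℤ) - (v m₂ : ℤ)) + ((N : ℤ) * (v n : ℤ)) * C := by
      intro j
      have h11 : (c j : ℤ) * ((u j m₁ : ℤ) - (u j m₂ : ℤ))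
          + ∑ i ∈ Finset.univ.erase j, (c i : ℤ) * ((u i m₁ : ℤ) - (u i m₂ : ℤ))
          = (N : ℤ) * ((v m₁ : ℤ) - (v m₂ : ℤ)) := by
        exact (Finset.add_sum_erase Finset.univ
          (fun i : Fin r => (c i : ℤ) * ((u i m₁ : ℤ) - (u i m₂ : ℤ)))
          (Finset.mem_univ j)).trans e
      have h12 : ∑ i ∈ Finset.univ.erase j, -(((N : ℤ) * (v n : ℤ)) * (u i m₂ : ℤ))
          ≤ ∑ i ∈ Finset.univ.erase j, (c i : ℤ) * ((u i m₁ : ℤ) - (u i m₂ : ℤ)) :=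
        Finset.sum_le_sum (fun i _ => TB i)
      have h13 : ∑ i ∈ Finset.univ.erase j, ((N : ℤ) * (v n : ℤ)) * (u i m₂ : ℤ)
          ≤ ∑ i, ((N : ℤ) * (v n : ℤ)) * (u i m₂ : ℤ) :=
        Finset.sum_le_sum_of_subset_of_nonneg (Finset.subset_univ _)
          (fun i _ _ => by positivity)
      rw [Finset.sum_neg_distrib] at h12
      rw [e2] at h13
      linarith
    have hKi : ∀ i : Fin r, (c i : ℤ) ≤ (N : ℤ) * (v n : ℤ)
        + ((N : ℤ) * ((v m₁ : ℤ) - (v m₂ : ℤ)) + ((N : ℤ) * (v n : ℤ)) * C) := by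
      intro i
      by_cases hin : u i n = 0
      · have hui := up i
        rw [hm i hin, mul_one] at hui
        have h14 : (0 : ℤ) ≤ (N : ℤ) * (v n : ℤ) := by positivity
        linarith
      · have h1 : (c i : ℤ) * (u i n : ℤ) ≤ (N : ℤ) * (v n : ℤ) := by
          rw [hcast n]
          exact Finset.single_le_sum (f := fun j : Fin r => (c j : ℤ) * (u j n : ℤ))
            (fun j _ => by positivity) (Finset.mem_univ i)
        have hin1 : (1 : ℤ) ≤ (u i n : ℤ) := by
          exact_mod_cast Nat.one_le_iff_ne_zero.2 hin
        have hc1 : (c i : ℤ) ≤ (N : ℤ) * (v n : ℤ) :=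
          le_trans (le_mul_of_one_le_right (by positivity) hin1) h1
        linarith [hsum0]
    have hfin : (N : ℤ) * (v g : ℤ)
        ≤ ((N : ℤ) * (v n : ℤ)
            + ((N : ℤ) * ((v m₁ : ℤ) - (v m₂ : ℤ)) + ((N : ℤ) * (v n : ℤ)) * C))
          * ∑ i, (u i g : ℤ) := by
      rw [hcast g, Finset.mul_sum]
      exact Finset.sum_le_sum
        (fun i _ => mul_le_mul_of_nonneg_right (hKi i) (by positivity))
    have expand : ((N : ℤ) * (v n : ℤ)
            + ((N : ℤ) * ((v m₁ : ℤ) - (v m₂ : ℤ)) + ((N : ℤ) * (v n : ℤ)) * C))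
          * ∑ i, (u i g : ℤ)
        = (N : ℤ) * ((((v n : ℤ)) + ((v m₁ : ℤ) - (v m₂ : ℤ)) + (v n : ℤ) * C)
          * ∑ i, (u i g : ℤ)) := by ring
    rw [expand] at hfin
    exact le_of_mul_le_mul_left hfin hNpos

private lemma isPWO_Ici_int (L : ℤ) : (Set.Ici L).IsPWO := by
  intro f'
  obtain ⟨f, hf, hff⟩ : ∃ f : ℕ → ℤ, (∀ i, f i ∈ Set.Ici L) ∧ ∀ i, f i = (f' i : ℤ) :=
    ⟨fun i => f' i, fun i => (f' i).2, fun _ => rfl⟩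
  set g : ℕ → ℕ := fun i => (f i - L).toNat with hg
  obtain ⟨i0, hgi0⟩ : ∃ i0 : ℕ, g i0 = sInf (Set.range g) :=
    Nat.sInf_mem (Set.range_nonempty g)
  refine ⟨i0, i0 + 1, Nat.lt_succ_self _, ?_⟩
  have hle : g i0 ≤ g (i0 + 1) := by
    rw [hgi0]
    exact Nat.sInf_le ⟨i0 + 1, rfl⟩
  have h1 : ((g i0 : ℤ)) = f i0 - L := Int.toNat_of_nonneg (by
    have := hf i0
    simp only [Set.mem_Ici] at this
    omega)
  have h2 : ((g (i0 + 1) : ℤ)) = f (i0 + 1) - L := Int.toNat_of_nonneg (by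
    have := hf (i0 + 1)
    simp only [Set.mem_Ici] at this
    omega)
  have : (g i0 : ℤ) ≤ (g (i0 + 1) : ℤ) := by exact_mod_cast hle
  show (f' i0 : ℤ) ≤ f' (i0 + 1)
  rw [← hff, ← hff]
  omega

end SeriesAux

/-- Let `M` be a sharp, fine and saturated monoid, let `m = m₁ - m₂ ∈ M^gp` and let
`n ∈ M ∖ {0}`.  Let `u 1, …, u r` be the generators of the one-dimensional faces of the
dual monoid `M^∨ = Hom(M, ℕ)` and assume `u j ^gp(m) = 1` for every `j` with `u j (n) = 0`.
Then: (1) `u(n) ≥ 1` for every local `u`; (2) for every `k ≥ 1` the function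
`u ↦ u^gp(m)` is bounded below on `{u local : u(n) = k}`; (3) for every `k ≥ 1` and
`j ∈ ℤ` the set `{u local : u(n) = k, u^gp(m) = j}` is finite.  Consequently the series
`Σ_{u ∈ M^{∨,loc}} L^{-u^gp(m)} T^{u(n)}` is a well-defined element of `ℤ((L⁻¹))[[T]]`
with zero constant term in `T`. -/
theorem series_welldefined (M : Type*) [AddCancelCommMonoid M] [AddMonoid.FG M]
    (hsharp : ∀ x : M, IsAddUnit x → x = 0) (hsat : IsSaturatedAddMonoid M)
    (m₁ m₂ n : M) (hn : n ≠ 0)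
    (r : ℕ) (u : Fin r → (M →+ ℕ)) (hinj : Function.Injective u)
    (hfaces : ∀ F : AddSubmonoid (M →+ ℕ),
      IsOneDimFace F ↔ ∃ i : Fin r, F = AddSubmonoid.multiples (u i))
    (hm : ∀ j : Fin r, u j n = 0 → (u j m₁ : ℤ) - (u j m₂ : ℤ) = 1) :
    (∀ v : M →+ ℕ, IsLocalAddHom v → 1 ≤ v n) ∧
    (∀ k : ℕ, 1 ≤ k →
      BddBelow {a : ℤ | ∃ v : M →+ ℕ, IsLocalAddHom v ∧ v n = k ∧
        (v m₁ : ℤ) - (v m₂ : ℤ) = a}) ∧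
    (∀ k : ℕ, 1 ≤ k → ∀ j : ℤ, (localLevelSet m₁ m₂ n k j).Finite) ∧
    (∃ G : PowerSeries RL, PowerSeries.constantCoeff G = 0 ∧
      IsLocalDualSeries m₁ m₂ n G) := by
    classical
  obtain ⟨S, hS⟩ : ∃ S : Finset M, AddSubmonoid.closure (S : Set M) = ⊤ := AddMonoid.FG.fg_top
  have ml := dual_decomp S hS u hfaces
  set C : ℤ := ∑ i, (u i m₂ : ℤ) with hCdef
  have hB : ∀ v : M →+ ℕ,
      -((v n : ℤ) * C) ≤ (v m₁ : ℤ) - (v m₂ : ℤ) ∧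
      ∀ g : M, (v g : ℤ) ≤
        ((v n : ℤ) + ((v m₁ : ℤ) - (v m₂ : ℤ)) + (v n : ℤ) * C) * ∑ i, (u i g : ℤ) := by
    intro v
    obtain ⟨N, hN, c, hc⟩ := ml v
    exact core_bounds u m₁ m₂ n hm v N hN c hc
  have part1 : ∀ v : M →+ ℕ, IsLocalAddHom v → 1 ≤ v n := by
    intro v hv
    have hnu : ¬ IsAddUnit n := fun h => hn (hsharp n h)
    exact Nat.one_le_iff_ne_zero.2 (hv n hnu)
  have fin : ∀ (b : ℕ) (a : ℤ), (localLevelSet m₁ m₂ n b a).Finite := by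
    intro b a
    set K₀ : ℤ := (b : ℤ) + a + (b : ℤ) * C with hK₀
    have hbound : ∀ v ∈ localLevelSet m₁ m₂ n b a, ∀ g : M,
        v g ≤ (K₀ * ∑ i, (u i g : ℤ)).toNat := by
      rintro v ⟨hvl, hvn, hva⟩ g
      have h1 := (hB v).2 g
      rw [hvn, hva] at h1
      have h2 := Int.toNat_le_toNat h1
      simpa using h2
    have hfinite : Finite ↥(localLevelSet m₁ m₂ n b a) := by
      refine Finite.of_injective
        (fun v : ↥(localLevelSet m₁ m₂ n b a) =>
          (fun g : ↥(S : Finset M) =>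
            (⟨v.1 g.1, Nat.lt_succ_of_le (hbound v.1 v.2 g.1)⟩ :
              Fin ((K₀ * ∑ i, (u i g.1 : ℤ)).toNat + 1)))) ?_
      intro v w h
      apply Subtype.ext
      refine hom_eq_on S hS (fun g hg => ?_)
      have h3 := congrFun h ⟨g, hg⟩
      simpa using congrArg Fin.val h3
    exact Set.finite_coe_iff.1 hfinite
  refine ⟨part1, ?_, fun k _ j => fin k j, ?_⟩
  · -- boundedness below
    intro k hk
    refine ⟨-((k : ℤ) * C), ?_⟩
    rintro a ⟨v, hvl, hvn, hva⟩
    have h1 := (hB v).1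
    rw [hvn, hva] at h1
    exact h1
  · -- the series
    have empty0 : ∀ a : ℤ, localLevelSet m₁ m₂ n 0 a = ∅ := by
      intro a
      ext v
      simp only [localLevelSet, Set.mem_setOf_eq, Set.mem_empty_iff_false, iff_false, not_and]
      intro hvl hvn
      have := part1 v hvl
      omega
    set f : ℕ → ℤ → ℤ := fun b a => (Nat.card (localLevelSet m₁ m₂ n b a) : ℤ) with hf
    have hsupp : ∀ b : ℕ, Function.support (f b) ⊆ Set.Ici (-((b : ℤ) * C)) := by
      intro b a ha
      have hne : (localLevelSet m₁ m₂ n b a).Nonempty := by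
        by_contra hco
        rw [Set.not_nonempty_iff_eq_empty] at hco
        apply ha
        simp [hf, hco]
      obtain ⟨v, hvl, hvn, hva⟩ := hne
      have h1 := (hB v).1
      rw [hvn, hva] at h1
      exact Set.mem_Ici.2 h1
    refine ⟨PowerSeries.mk
      (fun b => HahnSeries.mk (f b) (((isPWO_Ici_int _).mono (hsupp b)))), ?_, ?_⟩
    · rw [PowerSeries.constantCoeff_mk]
      apply HahnSeries.ext
      funext a
      show f 0 a = 0
      simp [hf, empty0 a]
    · intro b a
      refine ⟨fin b a, ?_⟩
      rw [PowerSeries.coeff_mk]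
end

section
/- Let M be a sharp, fine and saturated monoid of dimension d, let m ∈ M^gp and let n ∈ M ∖ {0}. Suppose the dual monoid M^∨ = Hom(M, ℕ) is simplicial, i.e. it has exactly d one-dimensional faces, whose generators u_1, …, u_d are linearly independent in Hom(M^gp, ℤ) ⊗ ℚ and rationally generate the cone of M^∨ (every element of M^∨ is a non-negative rational linear combination of u_1, …, u_d). Assume u_j^gp(m) = 1 for every j with u_j(n) = 0. Let P = {λ_1 u_1 + ⋯ + λ_d u_d ∈ M^{∨,loc} : λ_i ∈ ℚ, 0 < λ_i ≤ 1} be the fundamental parallelepiped. Then P is a finite set, each element 1 − L^{−u_i^gp(m)} T^{u_i(n)} (1 ≤ i ≤ d) is invertible in ℤ((L^{−1}))[[T]], and Σ_{u ∈ M^{∨,loc}} L^{−u^gp(m)} T^{u(n)} = (Σ_{u ∈ P} L^{−u^gp(m)} T^{u(n)}) · Π_{i=1}^{d} (1 − L^{−u_i^gp(m)} T^{u_i(n)})^{−1} in ℤ((L^{−1}))[[T]]. -/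
/-- The fundamental parallelepiped `P = {λ₁ u₁ + ⋯ + λ_d u_d ∈ M^{∨,loc} : λ_i ∈ ℚ ∩ (0,1]}`
attached to the generators `u i` of the one-dimensional faces of a simplicial dual monoid. -/
def fundamentalPara {M : Type*} [AddCommMonoid M] {d : ℕ} (u : Fin d → (M →+ ℕ)) :
    Set (M →+ ℕ) :=
  {v | IsLocalAddHom v ∧ ∃ lam : Fin d → ℚ, (∀ i, 0 < lam i ∧ lam i ≤ 1) ∧
    ∀ x : M, (v x : ℚ) = ∑ i, lam i * (u i x : ℚ)}

section AuxHom

open Finset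

variable {M : Type*} [AddCommMonoid M]

theorem sum_smul_apply {d : ℕ} (u : Fin d → (M →+ ℕ)) (k : Fin d → ℕ) (x : M) :
    (∑ i, k i • u i) x = ∑ i, k i * u i x := by
  rw [AddMonoidHom.finset_sum_apply]
  simp [smul_eq_mul]

theorem hom_le_on (S : Finset M) (hS : AddSubmonoid.closure (S : Set M) = ⊤)
    (f g : M →+ ℕ) (h : ∀ x ∈ S, f x ≤ g x) (x : M) : f x ≤ g x := by
  have hx : x ∈ AddSubmonoid.closure (S : Set M) := by rw [hS]; trivial
  induction hx using AddSubmonoid.closure_induction with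
  | mem y hy => exact h y hy
  | zero => simp
  | add a b ha hb iha ihb => simp only [map_add]; omega

theorem hom_ext_on (S : Finset M) (hS : AddSubmonoid.closure (S : Set M) = ⊤)
    (f g : M →+ ℕ) (h : ∀ x ∈ S, f x = g x) : f = g := by
  ext x
  exact le_antisymm
    (hom_le_on S hS f g (fun y hy => (h y hy).le) x)
    (hom_le_on S hS g f (fun y hy => (h y hy).ge) x)

/-- difference of homs into ℕ, when pointwise dominated -/
def subHom (f g : M →+ ℕ) (h : ∀ x, g x ≤ f x) : M →+ ℕ where
  toFun := fun x => f x - g x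
  map_zero' := by simp
  map_add' := by
    intro p q
    have h1 := h p; have h2 := h q
    simp only [map_add]
    omega

theorem subHom_apply (f g : M →+ ℕ) (h : ∀ x, g x ≤ f x) (x : M) :
    subHom f g h x = f x - g x := rfl

end AuxHom

section AuxGrp

variable {M : Type*} [AddCommMonoid M]

/-- The natural map `M → M^gp`. -/
def toGrp : M →+ GrpOf M := (grpCon M).mk'.comp (AddMonoidHom.inl M M)

lemma toGrp_injective {M : Type*} [AddCancelCommMonoid M] :
    Function.Injective (toGrp (M := M)) := by
  intro x y h
  have : (grpCon M) (x, 0) (y, 0) := by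
    rwa [← AddCon.eq (c := grpCon M)]
  obtain ⟨k, hk⟩ := this
  simpa using hk

/-- Groupification of a hom to ℕ, valued in ℤ. -/
def gpHom (v : M →+ ℕ) : GrpOf M →+ ℤ :=
  AddCon.lift _
    { toFun := fun p => (v p.1 : ℤ) - (v p.2 : ℤ)
      map_zero' := by simp
      map_add' := by intro p q; simp [map_add]; ring }
    (by
      rintro p q ⟨k, hk⟩
      have : v p.1 + v q.2 + v k = v q.1 + v p.2 + v k := by
        rw [← map_add, ← map_add, ← map_add, ← map_add, hk]
      show (v p.1 : ℤ) - (v p.2 : ℤ) = (v q.1 : ℤ) - (v q.2 : ℤ)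
      omega)

lemma gpHom_toGrp (v : M →+ ℕ) (x : M) : gpHom v (toGrp x) = v x := by
  show ((v x : ℤ) - (v 0 : ℤ)) = v x
  simp

end AuxGrp

section Sep
variable {M : Type*} [AddCancelCommMonoid M]

theorem separation {d : ℕ} (u : Fin d → (M →+ ℕ))
    (hdim : Nonempty (GrpOf M ≃+ (Fin d → ℤ)))
    (hindep : ∀ lam : Fin d → ℚ, (∀ x : M, ∑ i, lam i * (u i x : ℚ) = 0) → lam = 0)
    {x : M} (hx : x ≠ 0) : ∃ i, u i x ≠ 0 := by
  by_contra hcon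
  push_neg at hcon
  obtain ⟨e⟩ := hdim
  set y : Fin d → ℤ := e (toGrp x) with hy_def
  have hy : y ≠ 0 := by
    intro h0
    apply hx
    apply toGrp_injective
    apply e.injective
    have h1 : e (toGrp x) = 0 := h0
    simp only [map_zero]
    exact h1
  set f : Fin d → ((Fin d → ℤ) →+ ℤ) :=
    fun i => (gpHom (u i)).comp e.symm.toAddMonoidHom with hf_def
  set F : Fin d → ((Fin d → ℚ) →ₗ[ℚ] ℚ) :=
    fun i => ∑ z, (f i (Pi.single z 1) : ℚ) • LinearMap.proj z with hF_def
  have hFapp : ∀ i (w : Fin d → ℚ), F i w = ∑ z, (f i (Pi.single z 1) : ℚ) * w z := by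
    intro i w
    simp [hF_def, LinearMap.sum_apply, LinearMap.smul_apply, smul_eq_mul]
  have hcompat : ∀ i (w : Fin d → ℤ), F i (fun z => (w z : ℚ)) = (f i w : ℚ) := by
    intro i w
    rw [hFapp]
    have hw : w = ∑ z, Pi.single z (w z) := (Finset.univ_sum_single w).symm
    conv_rhs => rw [hw]
    rw [map_sum]
    push_cast
    refine Finset.sum_congr rfl (fun z _ => ?_)
    have : Pi.single z (w z) = ((w z) • Pi.single z 1 : Fin d → ℤ) := by
      funext t
      by_cases h : t = z <;> simp [Pi.single_apply, h]
    rw [this, map_zsmul]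
    push_cast [smul_eq_mul]
    ring
  have hFu : ∀ i (t : M), F i (fun z => ((e (toGrp t)) z : ℚ)) = (u i t : ℚ) := by
    intro i t
    rw [hcompat]
    simp [hf_def, gpHom_toGrp]
  have hind : LinearIndependent ℚ F := by
    rw [Fintype.linearIndependent_iff]
    intro q hq
    have hzero : ∀ t : M, ∑ i, q i * (u i t : ℚ) = 0 := by
      intro t
      have := congrFun (congrArg (fun (φ : (Fin d → ℚ) →ₗ[ℚ] ℚ) => (φ : (Fin d → ℚ) → ℚ))
        hq) (fun z => ((e (toGrp t)) z : ℚ))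
      simp only [LinearMap.coe_sum, Finset.sum_apply, LinearMap.smul_apply, smul_eq_mul,
        LinearMap.zero_apply, Pi.zero_apply] at this
      rw [← this]
      exact Finset.sum_congr rfl (fun i _ => by rw [hFu])
    have := hindep q hzero
    intro i; rw [this]; rfl
  have hspan : ⊤ ≤ Submodule.span ℚ (Set.range F) := by
    rw [hind.span_eq_top_of_card_eq_finrank' (by simp)]
  set yq : Fin d → ℚ := fun z => (y z : ℚ) with hyq_def
  have hyq : yq ≠ 0 := by
    intro h0
    apply hy
    funext z
    have := congrFun h0 z
    simpa [hyq_def] using this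
  have hvanish : ∀ φ : Module.Dual ℚ (Fin d → ℚ), φ yq = 0 := by
    intro φ
    have hφ : φ ∈ Submodule.span ℚ (Set.range F) := hspan trivial
    induction hφ using Submodule.span_induction with
    | mem ψ hψ =>
      obtain ⟨i, rfl⟩ := hψ
      have h1 : F i yq = (f i y : ℚ) := hcompat i y
      rw [h1]
      have h2 : f i y = u i x := by
        simp only [hf_def, hy_def, AddMonoidHom.comp_apply, AddEquiv.toAddMonoidHom_eq_coe,
          AddMonoidHom.coe_coe]
        rw [AddEquiv.symm_apply_apply, gpHom_toGrp]
      rw [h2, hcon i]; simp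
    | zero => simp
    | add ψ χ _ _ h1 h2 => simp [h1, h2]
    | smul c ψ _ h1 => simp [h1]
  exact hyq ((Module.forall_dual_apply_eq_zero_iff ℚ yq).mp hvanish)

end Sep

section AuxLT

lemma PS_monomial_eq (s : RL) (b : ℕ) :
    PowerSeries.monomial b s = PowerSeries.C s * PowerSeries.X ^ b := by
  ext k
  rw [PowerSeries.coeff_monomial, PowerSeries.coeff_C_mul_X_pow]

lemma LT_mul (a a' : ℤ) (b b' : ℕ) :
    LTmonomial a b * LTmonomial a' b' = LTmonomial (a + a') (b + b') := by
  rw [LTmonomial, LTmonomial, LTmonomial, PS_monomial_eq, PS_monomial_eq, PS_monomial_eq]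
  rw [show (PowerSeries.C (R := RL)) (HahnSeries.single a 1) * PowerSeries.X ^ b *
      ((PowerSeries.C (R := RL)) (HahnSeries.single a' 1) * PowerSeries.X ^ b')
      = (PowerSeries.C (R := RL)) (HahnSeries.single a 1) * (PowerSeries.C (R := RL)) (HahnSeries.single a' 1)
        * PowerSeries.X ^ (b + b') by ring]
  rw [← map_mul, HahnSeries.single_mul_single, one_mul]

lemma LT_one : LTmonomial 0 0 = 1 := by
  rw [LTmonomial]
  simp [PowerSeries.monomial_zero_eq_C_apply]

lemma prod_LT {d : ℕ} (c : Fin d → ℤ) (bb : Fin d → ℕ) (A : Finset (Fin d)) :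
    ∏ i ∈ A, LTmonomial (c i) (bb i) = LTmonomial (∑ i ∈ A, c i) (∑ i ∈ A, bb i) := by
  classical
  induction A using Finset.induction_on with
  | empty => simp [LT_one]
  | insert _ _ hx ih =>
    rw [Finset.prod_insert hx, Finset.sum_insert hx, Finset.sum_insert hx, ih, LT_mul]

lemma coeff_LT (a' : ℤ) (b' : ℕ) (b : ℕ) (a : ℤ) :
    ((PowerSeries.coeff b) (LTmonomial a' b')).coeff a
      = if b = b' ∧ a = a' then 1 else 0 := by
  rw [LTmonomial, PowerSeries.coeff_monomial]
  by_cases h : b = b'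
  · simp [h, HahnSeries.coeff_single]
  · simp [h]

lemma coeff_mul_LT (F : PowerSeries RL) (a' : ℤ) (b' : ℕ) (b : ℕ) (a : ℤ) :
    ((PowerSeries.coeff b) (F * LTmonomial a' b')).coeff a
      = if b' ≤ b then ((PowerSeries.coeff (b - b')) F).coeff (a - a') else 0 := by
  rw [LTmonomial, PS_monomial_eq, ← mul_assoc, PowerSeries.coeff_mul_X_pow']
  by_cases h : b' ≤ b
  · rw [if_pos h, if_pos h, PowerSeries.coeff_mul_C]
    have h2 := HahnSeries.coeff_mul_single_add
      (r := (1 : ℤ)) (x := (PowerSeries.coeff (b - b')) F) (a := a - a') (b := a')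
    rw [sub_add_cancel] at h2
    rw [h2, mul_one]
  · rw [if_neg h, if_neg h, HahnSeries.coeff_zero]

lemma LT_unit_pos (a : ℤ) {b : ℕ} (hb : b ≠ 0) : IsUnit (1 - LTmonomial a b) := by
  rw [PowerSeries.isUnit_iff_constantCoeff, map_sub, map_one]
  have : (PowerSeries.constantCoeff) (LTmonomial a b) = 0 := by
    rw [LTmonomial, ← PowerSeries.coeff_zero_eq_constantCoeff_apply,
      PowerSeries.coeff_monomial]
    simp [Ne.symm hb]
  rw [this, sub_zero]
  exact isUnit_one

lemma LT_unit_zero : IsUnit (1 - LTmonomial 1 0) := by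
  have h1 : (1 - LTmonomial 1 0 : PowerSeries RL)
      = PowerSeries.C (1 - HahnSeries.single (1 : ℤ) (1 : ℤ)) := by
    rw [map_sub, map_one, LTmonomial, PowerSeries.monomial_zero_eq_C_apply]
  rw [h1]
  apply IsUnit.map
  have h2 : (1 - HahnSeries.single (1 : ℤ) (1 : ℤ) : RL)
      = HahnSeries.ofPowerSeries ℤ ℤ (1 - PowerSeries.X) := by
    rw [RingHom.map_sub, RingHom.map_one, HahnSeries.ofPowerSeries_X]
  rw [h2]
  apply IsUnit.map
  rw [PowerSeries.isUnit_iff_constantCoeff]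
  simp

/-- Extraction of the coefficient of `L^{-a} T^b`, as an additive map. -/
noncomputable def coeff2 (b : ℕ) (a : ℤ) : PowerSeries RL →+ ℤ where
  toFun := fun φ => ((PowerSeries.coeff b) φ).coeff a
  map_zero' := by simp
  map_add' := by intro φ ψ; simp [HahnSeries.coeff_add]

lemma coeff2_apply (b : ℕ) (a : ℤ) (φ : PowerSeries RL) :
    coeff2 b a φ = ((PowerSeries.coeff b) φ).coeff a := rfl

end AuxLT

set_option maxHeartbeats 4000000 in
/-- Let `M` be a sharp, fine and saturated monoid of dimension `d` whose dual `M^∨` is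
simplicial: it has exactly `d` one-dimensional faces, with generators `u 1, …, u d` that are
`ℚ`-linearly independent and rationally generate the cone of `M^∨`.  Let `m = m₁ - m₂ ∈ M^gp`
and `n ∈ M ∖ {0}`, and assume `u j ^gp(m) = 1` whenever `u j (n) = 0`.  Then the fundamental
parallelepiped `P` is finite, each `1 - L^{-u i ^gp(m)} T^{u i (n)}` is invertible in
`ℤ((L⁻¹))[[T]]`, and
`Σ_{u ∈ M^{∨,loc}} L^{-u^gp(m)} T^{u(n)}
  = (Σ_{u ∈ P} L^{-u^gp(m)} T^{u(n)}) · Π_i (1 - L^{-u i ^gp(m)} T^{u i (n)})⁻¹`. -/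
theorem series_simplicial_formula (M : Type*) [AddCancelCommMonoid M] [AddMonoid.FG M]
    (hsharp : ∀ x : M, IsAddUnit x → x = 0) (hsat : IsSaturatedAddMonoid M)
    (d : ℕ) (hdim : Nonempty (GrpOf M ≃+ (Fin d → ℤ)))
    (m₁ m₂ n : M) (hn : n ≠ 0)
    (u : Fin d → (M →+ ℕ)) (hinj : Function.Injective u)
    (hfaces : ∀ F : AddSubmonoid (M →+ ℕ),
      IsOneDimFace F ↔ ∃ i : Fin d, F = AddSubmonoid.multiples (u i))
    (hindep : ∀ lam : Fin d → ℚ, (∀ x : M, ∑ i, lam i * (u i x : ℚ) = 0) → lam = 0)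
    (hgen : ∀ v : M →+ ℕ, ∃ lam : Fin d → ℚ, (∀ i, 0 ≤ lam i) ∧
      ∀ x : M, (v x : ℚ) = ∑ i, lam i * (u i x : ℚ))
    (hm : ∀ j : Fin d, u j n = 0 → (u j m₁ : ℤ) - (u j m₂ : ℤ) = 1) :
    ∃ Pfin : Finset (M →+ ℕ), (↑Pfin : Set (M →+ ℕ)) = fundamentalPara u ∧
      (∀ i : Fin d, IsUnit (1 - LTmonomial ((u i m₁ : ℤ) - (u i m₂ : ℤ)) (u i n))) ∧
      ∃ G : PowerSeries RL, IsLocalDualSeries m₁ m₂ n G ∧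
        G = (∑ v ∈ Pfin, LTmonomial ((v m₁ : ℤ) - (v m₂ : ℤ)) (v n)) *
          ∏ i : Fin d,
            Ring.inverse (1 - LTmonomial ((u i m₁ : ℤ) - (u i m₂ : ℤ)) (u i n)) := by
  classical
  obtain ⟨S, hS⟩ : ∃ S : Finset M, AddSubmonoid.closure (S : Set M) = ⊤ :=
    AddMonoid.fg_def.mp inferInstance
  -- separation
  have hsep : ∀ x : M, x ≠ 0 → ∃ i, u i x ≠ 0 := fun x hx => separation u hdim hindep hx
  -- uniqueness of coordinates
  have uniq : ∀ (l l' : Fin d → ℚ),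
      (∀ x, ∑ i, l i * (u i x : ℚ) = ∑ i, l' i * (u i x : ℚ)) → l = l' := by
    intro l l' h
    have h0 := hindep (l - l') (fun x => by
      simp only [Pi.sub_apply, sub_mul, Finset.sum_sub_distrib, h x, sub_self])
    funext i
    have := congrFun h0 i
    simp only [Pi.sub_apply, Pi.zero_apply, sub_eq_zero] at this
    exact this
  -- abbreviations
  set bb : Fin d → ℕ := fun i => u i n with hbb
  set cc : Fin d → ℤ := fun i => (u i m₁ : ℤ) - (u i m₂ : ℤ) with hcc
  set Av : (M →+ ℕ) → ℤ := fun v => (v m₁ : ℤ) - (v m₂ : ℤ) with hAv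
  set sumk : (Fin d → ℕ) → (M →+ ℕ) := fun k => ∑ i, k i • u i with hsumk
  have sumk_app : ∀ (k : Fin d → ℕ) (x : M), sumk k x = ∑ i, k i * u i x :=
    fun k x => sum_smul_apply u k x
  have hdelta : ∀ (j : Fin d) (x : M),
      ∑ i, (if i = j then (1:ℚ) else 0) * (u i x : ℚ) = (u j x : ℚ) := by
    intro j x
    rw [Finset.sum_eq_single j]
    · simp
    · intro i _ hij; simp [hij]
    · intro h; exact absurd (Finset.mem_univ j) h
  -- positivity of coordinates of local homs
  have coord_pos : ∀ (v : M →+ ℕ), IsLocalAddHom v → ∀ (l : Fin d → ℚ),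
      (∀ x, (v x : ℚ) = ∑ i, l i * (u i x : ℚ)) → ∀ j, 0 < l j := by
    intro v hv l hl j
    set N : ℕ := S.sup (u j) + 1 with hN
    have hgle : ∀ g ∈ S, u j g ≤ N * v g := by
      intro g hg
      by_cases hvg : v g = 0
      · have hu : IsAddUnit g := by
          by_contra hu'
          exact hv g hu' hvg
        have hg0 : g = 0 := hsharp g hu
        rw [hg0]; simp
      · have h1 : u j g ≤ S.sup (u j) := Finset.le_sup hg
        have h2 : 1 ≤ v g := Nat.one_le_iff_ne_zero.mpr hvg
        calc u j g ≤ N := by omega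
          _ = N * 1 := (mul_one N).symm
          _ ≤ N * v g := Nat.mul_le_mul_left N h2
    have hle : ∀ x, u j x ≤ (N • v) x := by
      intro x
      exact hom_le_on S hS (u j) (N • v)
        (fun g hg => by simpa [smul_eq_mul] using hgle g hg) x
    set w : M →+ ℕ := subHom (N • v) (u j) hle with hw
    obtain ⟨nu, hnu0, hnu⟩ := hgen w
    have hkey : ∀ x : M,
        ∑ i, ((N : ℚ) * l i) * (u i x : ℚ)
          = ∑ i, (nu i + if i = j then 1 else 0) * (u i x : ℚ) := by
      intro x
      have h1 : w x + u j x = N * v x := by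
        have h2 := hle x
        rw [hw, subHom_apply]
        simp only [AddMonoidHom.nsmul_apply, smul_eq_mul] at h2 ⊢
        omega
      calc ∑ i, ((N : ℚ) * l i) * (u i x : ℚ)
          = (N : ℚ) * ∑ i, l i * (u i x : ℚ) := by
            rw [Finset.mul_sum]
            exact Finset.sum_congr rfl (fun i _ => by ring)
        _ = (N : ℚ) * (v x : ℚ) := by rw [hl x]
        _ = ((N * v x : ℕ) : ℚ) := by push_cast; ring
        _ = ((w x + u j x : ℕ) : ℚ) := by rw [h1]
        _ = (w x : ℚ) + (u j x : ℚ) := by push_cast; ring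
        _ = ∑ i, nu i * (u i x : ℚ) + (u j x : ℚ) := by rw [hnu x]
        _ = ∑ i, (nu i + if i = j then 1 else 0) * (u i x : ℚ) := by
            rw [show (∑ i, (nu i + if i = j then (1:ℚ) else 0) * (u i x : ℚ))
                = (∑ i, nu i * (u i x : ℚ))
                  + ∑ i, (if i = j then (1:ℚ) else 0) * (u i x : ℚ) by
              rw [← Finset.sum_add_distrib]
              exact Finset.sum_congr rfl (fun i _ => by ring)]
            rw [hdelta j x]
    have huniq := uniq (fun i => (N : ℚ) * l i) (fun i => nu i + if i = j then 1 else 0) hkey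
    have hj := congrFun huniq j
    norm_num at hj
    have hNQ : (0 : ℚ) < (N : ℚ) := by
      have : 0 < N := by omega
      exact_mod_cast this
    have hnuj := hnu0 j
    by_contra hneg
    push_neg at hneg
    have h1 : (N : ℚ) * l j ≤ 0 := mul_nonpos_of_nonneg_of_nonpos (le_of_lt hNQ) hneg
    rw [hj] at h1
    linarith

  -- decomposition: existence
  have decomp : ∀ v : M →+ ℕ, IsLocalAddHom v →
      ∃ p, p ∈ fundamentalPara u ∧ ∃ k : Fin d → ℕ, v = p + sumk k := by
    intro v hv
    obtain ⟨l, hl0, hl⟩ := hgen v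
    have hpos : ∀ j, 0 < l j := coord_pos v hv l hl
    set k : Fin d → ℕ := fun i => (⌈l i⌉ - 1).toNat with hk
    have hkcast : ∀ i, ((k i : ℤ) : ℚ) = (⌈l i⌉ : ℚ) - 1 := by
      intro i
      have h1 : (1:ℤ) ≤ ⌈l i⌉ := by
        have := Int.ceil_pos.mpr (hpos i)
        omega
      have h2 : (k i : ℤ) = ⌈l i⌉ - 1 := by
        rw [hk]
        simp only []
        rw [Int.toNat_of_nonneg (by omega)]
      rw [h2]; push_cast; ring
    have hklt : ∀ i, (k i : ℚ) < l i := by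
      intro i
      have h1 : (⌈l i⌉ : ℚ) < l i + 1 := by exact_mod_cast Int.ceil_lt_add_one (l i)
      have h2 := hkcast i
      push_cast at h2
      linarith
    have hkge : ∀ i, l i ≤ (k i : ℚ) + 1 := by
      intro i
      have h1 : l i ≤ (⌈l i⌉ : ℚ) := Int.le_ceil (l i)
      have h2 := hkcast i
      push_cast at h2
      linarith
    have hqle : ∀ x, sumk k x ≤ v x := by
      intro x
      have hcast : ((sumk k x : ℕ) : ℚ) ≤ ((v x : ℕ) : ℚ) := by
        rw [sumk_app, hl x]
        push_cast
        apply Finset.sum_le_sum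
        intro i _
        have h0 : (0:ℚ) ≤ (u i x : ℚ) := Nat.cast_nonneg _
        have h1 := hklt i
        nlinarith
      exact_mod_cast hcast
    set p : M →+ ℕ := subHom v (sumk k) hqle with hp
    have hp_app : ∀ x, (p x : ℚ) = ∑ i, (l i - k i) * (u i x : ℚ) := by
      intro x
      have h1 : (p x : ℚ) = (v x : ℚ) - ((sumk k x : ℕ) : ℚ) := by
        rw [hp, subHom_apply]
        have := hqle x
        push_cast [Nat.cast_sub this]
        ring
      rw [h1, hl x]
      rw [show ((sumk k x : ℕ) : ℚ) = ∑ i, (k i : ℚ) * (u i x : ℚ) by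
        rw [sumk_app]; push_cast; ring]
      rw [← Finset.sum_sub_distrib]
      exact Finset.sum_congr rfl (fun i _ => by ring)
    have hp_loc : IsLocalAddHom p := by
      intro x hxu hpx
      have hx0 : x ≠ 0 := fun h => hxu (h ▸ isAddUnit_zero)
      obtain ⟨i0, hi0⟩ := hsep x hx0
      have h1 : ∑ i, (l i - k i) * (u i x : ℚ) = 0 := by
        rw [← hp_app x, hpx]; simp
      have h2 : ∀ i ∈ Finset.univ, (0:ℚ) ≤ (l i - k i) * (u i x : ℚ) := by
        intro i _
        have := hklt i
        have h0 : (0:ℚ) ≤ (u i x : ℚ) := Nat.cast_nonneg _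
        nlinarith
      have h3 := (Finset.sum_eq_zero_iff_of_nonneg h2).mp h1 i0 (Finset.mem_univ i0)
      have h4 : (0:ℚ) < l i0 - k i0 := by have := hklt i0; linarith
      have h5 : (u i0 x : ℚ) = 0 := by
        rcases mul_eq_zero.mp h3 with h | h
        · exact absurd h (ne_of_gt h4)
        · exact h
      exact hi0 (by exact_mod_cast h5)
    have hmu01 : ∀ i, 0 < l i - (k i : ℚ) ∧ l i - (k i : ℚ) ≤ 1 := fun i =>
      ⟨by have := hklt i; linarith, by have := hkge i; linarith⟩
    refine ⟨p, ⟨hp_loc, fun i => l i - k i, hmu01, hp_app⟩, k, ?_⟩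
    ext x
    have := hqle x
    simp only [AddMonoidHom.add_apply, hp, subHom_apply]
    omega
  -- decomposition: uniqueness
  have decompu : ∀ p p', p ∈ fundamentalPara u → p' ∈ fundamentalPara u →
      ∀ k k' : Fin d → ℕ, p + sumk k = p' + sumk k' → p = p' ∧ k = k' := by
    intro p p' hpmem hpmem' k k' heq
    obtain ⟨hploc, mu, hmu, hmueq⟩ := hpmem
    obtain ⟨hploc', mu', hmu', hmueq'⟩ := hpmem'
    have happ : ∀ x, p x + sumk k x = p' x + sumk k' x := by
      intro x
      have := congrArg (fun (f : M →+ ℕ) => f x) heq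
      simpa [AddMonoidHom.add_apply] using this
    have hcoord : (fun i => mu i + (k i : ℚ)) = (fun i => mu' i + (k' i : ℚ)) := by
      apply uniq
      intro x
      have h1 : ∑ i, (mu i + (k i : ℚ)) * (u i x : ℚ)
          = (p x : ℚ) + ((sumk k x : ℕ) : ℚ) := by
        rw [hmueq x, show ((sumk k x : ℕ) : ℚ) = ∑ i, (k i : ℚ) * (u i x : ℚ) by
          rw [sumk_app]; push_cast; ring, ← Finset.sum_add_distrib]
        exact Finset.sum_congr rfl (fun i _ => by ring)
      have h2 : ∑ i, (mu' i + (k' i : ℚ)) * (u i x : ℚ)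
          = (p' x : ℚ) + ((sumk k' x : ℕ) : ℚ) := by
        rw [hmueq' x, show ((sumk k' x : ℕ) : ℚ) = ∑ i, (k' i : ℚ) * (u i x : ℚ) by
          rw [sumk_app]; push_cast; ring, ← Finset.sum_add_distrib]
        exact Finset.sum_congr rfl (fun i _ => by ring)
      rw [h1, h2]
      have := happ x
      push_cast
      exact_mod_cast congrArg (fun (t : ℕ) => (t : ℚ)) this
    have hkk : k = k' := by
      funext i
      have h := congrFun hcoord i
      have h1 := (hmu i).1
      have h2 := (hmu i).2
      have h3 := (hmu' i).1
      have h4 := (hmu' i).2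
      have e1 : (k i : ℚ) < (k' i : ℚ) + 1 := by linarith
      have e2 : (k' i : ℚ) < (k i : ℚ) + 1 := by linarith
      have e1' : k i < k' i + 1 := by exact_mod_cast e1
      have e2' : k' i < k i + 1 := by exact_mod_cast e2
      omega
    refine ⟨?_, hkk⟩
    subst hkk
    ext x
    have := happ x
    omega
  -- finiteness of the fundamental parallelepiped
  have hPfin : (fundamentalPara u).Finite := by
    set E : (M →+ ℕ) → (↥S → ℕ) := fun v g => v ↑g with hE
    have hEinj : Function.Injective E := by
      intro v w h
      apply hom_ext_on S hS
      intro g hg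
      exact congrFun h ⟨g, hg⟩
    have hsubset : fundamentalPara u
        ⊆ E ⁻¹' (Set.univ.pi fun g : ↥S => Set.Iic (∑ i, u i ↑g)) := by
      intro v hv
      obtain ⟨hvloc, l, hl01, hl⟩ := hv
      intro g _
      simp only [Set.mem_Iic]
      have hcast : ((v (g : M) : ℕ) : ℚ) ≤ ((∑ i, u i (g : M) : ℕ) : ℚ) := by
        rw [hl]
        push_cast
        apply Finset.sum_le_sum
        intro i _
        have h0 : (0:ℚ) ≤ (u i (g : M) : ℚ) := Nat.cast_nonneg _
        have h1 := (hl01 i).1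
        have h2 := (hl01 i).2
        nlinarith
      exact_mod_cast hcast
    exact Set.Finite.subset
      (Set.Finite.preimage hEinj.injOn (Set.Finite.pi fun g => Set.finite_Iic _)) hsubset
  set Pfin : Finset (M →+ ℕ) := hPfin.toFinset with hPfin_def
  have hPmem : ∀ p, p ∈ Pfin ↔ p ∈ fundamentalPara u := fun p => hPfin.mem_toFinset
  have hParaLoc : ∀ p, p ∈ fundamentalPara u → IsLocalAddHom p := fun p hp => hp.1
  have hplus_loc : ∀ (p : M →+ ℕ) (k : Fin d → ℕ),
      IsLocalAddHom p → IsLocalAddHom (p + sumk k) := by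
    intro p k hp x hx
    have := hp x hx
    simp only [AddMonoidHom.add_apply]
    omega
  -- stats of a decomposition
  have stats_n : ∀ (p : M →+ ℕ) (k : Fin d → ℕ),
      (p + sumk k) n = p n + ∑ i, k i * bb i := by
    intro p k
    simp only [AddMonoidHom.add_apply, sumk_app, hbb]
  have stats_m : ∀ (p : M →+ ℕ) (k : Fin d → ℕ),
      Av (p + sumk k) = Av p + ∑ i, (k i : ℤ) * cc i := by
    intro p k
    simp only [hAv, AddMonoidHom.add_apply, hcc]
    push_cast [sumk_app]
    rw [show (∑ i, (k i : ℤ) * ((u i m₁ : ℤ) - (u i m₂ : ℤ)))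
        = (∑ i, (k i : ℤ) * (u i m₁ : ℤ)) - ∑ i, (k i : ℤ) * (u i m₂ : ℤ) by
      rw [← Finset.sum_sub_distrib]
      exact Finset.sum_congr rfl (fun i _ => by ring)]
    ring
  -- bounds
  set CA : ℤ := ((Pfin.sup fun p => (Av p).natAbs : ℕ) : ℤ) with hCA
  set CC : ℤ := ∑ i, |cc i| with hCC
  have hCA0 : (0:ℤ) ≤ CA := Int.ofNat_nonneg _
  have hCC0 : (0:ℤ) ≤ CC := Finset.sum_nonneg fun i _ => abs_nonneg _
  have hCAle : ∀ p, p ∈ Pfin → |Av p| ≤ CA := by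
    intro p hp
    rw [Int.abs_eq_natAbs, hCA]
    exact_mod_cast Finset.le_sup (f := fun p => (Av p).natAbs) hp
  have key_bound : ∀ (b : ℕ) (a : ℤ) (p : M →+ ℕ) (k : Fin d → ℕ), p ∈ Pfin →
      p n + ∑ i, k i * bb i = b → Av p + ∑ i, (k i : ℤ) * cc i = a →
      (∀ i, k i < b + (a + CA + (b : ℤ) * CC).toNat + 1) ∧ (-CA - (b : ℤ) * CC ≤ a) := by
    intro b a p k hp hb ha
    have hknz : ∀ i, bb i ≠ 0 → k i ≤ b := by
      intro i hi
      have h1 : k i ≤ k i * bb i := Nat.le_mul_of_pos_right _ (Nat.pos_of_ne_zero hi)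
      have h2 : k i * bb i ≤ ∑ j, k j * bb j :=
        Finset.single_le_sum (f := fun j => k j * bb j) (fun j _ => Nat.zero_le _)
          (Finset.mem_univ i)
      omega
    have hsplit : ∑ i, (k i : ℤ) * cc i
        = (∑ i ∈ Finset.univ.filter (fun i => bb i = 0), (k i : ℤ) * cc i)
          + ∑ i ∈ Finset.univ.filter (fun i => ¬ bb i = 0), (k i : ℤ) * cc i :=
      (Finset.sum_filter_add_sum_filter_not _ _ _).symm
    have hzero_eq : ∑ i ∈ Finset.univ.filter (fun i => bb i = 0), (k i : ℤ) * cc i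
        = ∑ i ∈ Finset.univ.filter (fun i => bb i = 0), (k i : ℤ) := by
      refine Finset.sum_congr rfl (fun i hi => ?_)
      have hcc1 : cc i = 1 := hm i ((Finset.mem_filter.mp hi).2)
      rw [hcc1, mul_one]
    have hzero_nonneg : (0:ℤ) ≤ ∑ i ∈ Finset.univ.filter (fun i => bb i = 0), (k i : ℤ) :=
      Finset.sum_nonneg fun i _ => Int.ofNat_nonneg _
    have hnz_lb : -((b : ℤ) * CC)
        ≤ ∑ i ∈ Finset.univ.filter (fun i => ¬ bb i = 0), (k i : ℤ) * cc i := by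
      have h1 : ∀ i ∈ Finset.univ.filter (fun i => ¬ bb i = 0),
          -((b : ℤ) * |cc i|) ≤ (k i : ℤ) * cc i := by
        intro i hi
        have hk : (k i : ℤ) ≤ (b : ℤ) := by
          exact_mod_cast hknz i ((Finset.mem_filter.mp hi).2)
        have hk0 : (0:ℤ) ≤ (k i : ℤ) := Int.ofNat_nonneg _
        have habs : |(k i : ℤ) * cc i| = (k i : ℤ) * |cc i| := by
          rw [abs_mul, abs_of_nonneg hk0]
        have hneg := neg_abs_le ((k i : ℤ) * cc i)
        have hc0 : (0:ℤ) ≤ |cc i| := abs_nonneg _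
        nlinarith
      have h2 : ∑ i ∈ Finset.univ.filter (fun i => ¬ bb i = 0), |cc i| ≤ CC := by
        rw [hCC]
        exact Finset.sum_le_sum_of_subset_of_nonneg (Finset.filter_subset _ _)
          (fun i _ _ => abs_nonneg _)
      have h3 : ∑ i ∈ Finset.univ.filter (fun i => ¬ bb i = 0), -((b:ℤ) * |cc i|)
          = -((b:ℤ) * ∑ i ∈ Finset.univ.filter (fun i => ¬ bb i = 0), |cc i|) := by
        rw [Finset.mul_sum, ← Finset.sum_neg_distrib]
      have h4 := Finset.sum_le_sum h1
      have hb0 : (0:ℤ) ≤ (b:ℤ) := Int.ofNat_nonneg _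
      nlinarith [h4, h2, h3]
    have habs := abs_le.mp (hCAle p hp)
    constructor
    · intro i
      by_cases hbi : bb i = 0
      · have hki : (k i : ℤ) ≤ ∑ j ∈ Finset.univ.filter (fun j => bb j = 0), (k j : ℤ) :=
          Finset.single_le_sum (f := fun j => (k j : ℤ)) (fun j _ => Int.ofNat_nonneg _)
            (Finset.mem_filter.mpr ⟨Finset.mem_univ i, hbi⟩)
        have hle2 : (k i : ℤ) ≤ a + CA + (b:ℤ) * CC := by
          rw [hsplit, hzero_eq] at ha
          linarith [hnz_lb, hki, habs.1]
        have h0 : (0:ℤ) ≤ a + CA + (b:ℤ)*CC := le_trans (Int.ofNat_nonneg _) hle2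
        have : k i ≤ (a + CA + (b:ℤ) * CC).toNat := by
          rw [Int.le_toNat h0]
          exact hle2
        omega
      · have := hknz i hbi; omega
    · rw [hsplit, hzero_eq] at ha
      linarith [hnz_lb, hzero_nonneg, habs.1]
  -- the finite sets of decompositions
  set Bk : ℕ → ℤ → ℕ := fun b a => b + (a + CA + (b:ℤ) * CC).toNat + 1 with hBk
  set Kset : ℕ → ℤ → Finset ((M →+ ℕ) × (Fin d → ℕ)) := fun b a =>
    (Pfin ×ˢ Fintype.piFinset (fun _ : Fin d => Finset.range (Bk b a))).filter
      (fun pk => pk.1 n + ∑ i, pk.2 i * bb i = b ∧ Av pk.1 + ∑ i, (pk.2 i : ℤ) * cc i = a)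
    with hKset
  have mem_Kset : ∀ (b : ℕ) (a : ℤ) (pk : (M →+ ℕ) × (Fin d → ℕ)),
      pk ∈ Kset b a ↔ pk.1 ∈ Pfin ∧ pk.1 n + ∑ i, pk.2 i * bb i = b
        ∧ Av pk.1 + ∑ i, (pk.2 i : ℤ) * cc i = a := by
    intro b a pk
    constructor
    · intro h
      have h1 := Finset.mem_filter.mp h
      exact ⟨(Finset.mem_product.mp h1.1).1, h1.2.1, h1.2.2⟩
    · rintro ⟨h1, h2, h3⟩
      refine Finset.mem_filter.mpr ⟨Finset.mem_product.mpr ⟨h1, ?_⟩, h2, h3⟩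
      rw [Fintype.mem_piFinset]
      intro i
      rw [Finset.mem_range]
      exact (key_bound b a pk.1 pk.2 h1 h2 h3).1 i
  -- level sets are images of Ksets
  have level_eq : ∀ (b : ℕ) (a : ℤ),
      localLevelSet m₁ m₂ n b a = ↑((Kset b a).image fun pk => pk.1 + sumk pk.2) := by
    intro b a
    ext v
    simp only [Finset.coe_image, Set.mem_image, Finset.mem_coe, localLevelSet,
      Set.mem_setOf_eq]
    constructor
    · rintro ⟨hvloc, hvn, hvm⟩
      obtain ⟨p, hpmem, k, rfl⟩ := decomp v hvloc
      refine ⟨(p, k), ?_, rfl⟩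
      rw [mem_Kset]
      refine ⟨(hPmem p).mpr hpmem, ?_, ?_⟩
      · rw [← hvn, stats_n]
      · rw [show Av p + ∑ i, (k i : ℤ) * cc i = Av (p + sumk k) from (stats_m p k).symm]
        exact hvm
    · rintro ⟨⟨p, k⟩, hmem, rfl⟩
      rw [mem_Kset] at hmem
      obtain ⟨hp, h2, h3⟩ := hmem
      have hploc := hParaLoc p ((hPmem p).mp hp)
      refine ⟨hplus_loc p k hploc, ?_, ?_⟩
      · rw [stats_n]; exact h2
      · rw [show ((p + sumk k) m₁ : ℤ) - ((p + sumk k) m₂ : ℤ) = Av (p + sumk k) from rfl,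
          stats_m]
        exact h3
  have himagecard : ∀ (b : ℕ) (a : ℤ),
      ((Kset b a).image fun pk => pk.1 + sumk pk.2).card = (Kset b a).card := by
    intro b a
    apply Finset.card_image_of_injOn
    intro pk hpk pk' hpk' heq
    rw [Finset.mem_coe, mem_Kset] at hpk hpk'
    have hres := decompu pk.1 pk'.1 ((hPmem _).mp hpk.1) ((hPmem _).mp hpk'.1)
      pk.2 pk'.2 heq
    exact Prod.ext hres.1 hres.2
  have hlevel_fin : ∀ (b : ℕ) (a : ℤ), (localLevelSet m₁ m₂ n b a).Finite := by
    intro b a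
    rw [level_eq b a]
    exact Finset.finite_toSet _
  have hlevel_card : ∀ (b : ℕ) (a : ℤ),
      (Nat.card (localLevelSet m₁ m₂ n b a) : ℤ) = ((Kset b a).card : ℤ) := by
    intro b a
    rw [level_eq b a, Nat.card_coe_set_eq, Set.ncard_coe_finset, himagecard b a]
  -- the generating series
  have hsupp : ∀ b : ℕ, (Function.support fun a => ((Kset b a).card : ℤ)).IsPWO := by
    intro b
    have hsub : (Function.support fun a => ((Kset b a).card : ℤ))
        ⊆ Set.Ici (-CA - (b:ℤ) * CC) := by
      intro a ha
      simp only [Function.mem_support] at ha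
      have hne : (Kset b a).Nonempty := by
        rw [Finset.nonempty_iff_ne_empty]
        intro h
        exact ha (by rw [h]; simp)
      obtain ⟨pk, hpk⟩ := hne
      rw [mem_Kset] at hpk
      exact (key_bound b a pk.1 pk.2 hpk.1 hpk.2.1 hpk.2.2).2
    have hbdd : BddBelow (Function.support fun a => ((Kset b a).card : ℤ)) :=
      ⟨-CA - (b:ℤ) * CC, fun a ha => hsub ha⟩
    exact Set.IsWF.isPWO hbdd.wellFoundedOn_lt
  set F : PowerSeries RL := PowerSeries.mk
    (fun b => ⟨fun a => ((Kset b a).card : ℤ), hsupp b⟩) with hF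
  have hFcoeff : ∀ (b : ℕ) (a : ℤ),
      ((PowerSeries.coeff b) F).coeff a = ((Kset b a).card : ℤ) := by
    intro b a
    rw [hF, PowerSeries.coeff_mk]
  have hFlds : IsLocalDualSeries m₁ m₂ n F := by
    intro b a
    exact ⟨hlevel_fin b a, by rw [hFcoeff b a, hlevel_card b a]⟩
  -- the units
  have hUnit : ∀ i : Fin d, IsUnit (1 - LTmonomial ((u i m₁ : ℤ) - (u i m₂ : ℤ)) (u i n)) := by
    intro i
    by_cases hbi : u i n = 0
    · rw [hbi, hm i hbi]
      exact LT_unit_zero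
    · exact LT_unit_pos _ hbi

  -- indicator function of a subset
  set chi : Finset (Fin d) → Fin d → ℕ := fun A i => if i ∈ A then 1 else 0 with hchi
  have chi_sum_nat : ∀ (k : Fin d → ℕ) (A : Finset (Fin d)),
      ∑ i, (k i + chi A i) * bb i = (∑ i, k i * bb i) + ∑ i ∈ A, bb i := by
    intro k A
    calc ∑ i, (k i + chi A i) * bb i
        = ∑ i, (k i * bb i + chi A i * bb i) :=
          Finset.sum_congr rfl (fun i _ => add_mul _ _ _)
      _ = (∑ i, k i * bb i) + ∑ i, chi A i * bb i := Finset.sum_add_distrib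
      _ = (∑ i, k i * bb i) + ∑ i ∈ A, bb i := by
          congr 1
          rw [show (∑ i, chi A i * bb i) = ∑ i, (if i ∈ A then bb i else 0) from
            Finset.sum_congr rfl (fun i _ => by rw [hchi]; by_cases h : i ∈ A <;> simp [h])]
          rw [Finset.sum_ite_mem, Finset.univ_inter]
  have chi_sum_int : ∀ (k : Fin d → ℕ) (A : Finset (Fin d)),
      ∑ i, ((k i + chi A i : ℕ) : ℤ) * cc i = (∑ i, (k i : ℤ) * cc i) + ∑ i ∈ A, cc i := by
    intro k A
    calc ∑ i, ((k i + chi A i : ℕ) : ℤ) * cc i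
        = ∑ i, ((k i : ℤ) * cc i + (chi A i : ℤ) * cc i) :=
          Finset.sum_congr rfl (fun i _ => by push_cast; ring)
      _ = (∑ i, (k i : ℤ) * cc i) + ∑ i, (chi A i : ℤ) * cc i := Finset.sum_add_distrib
      _ = (∑ i, (k i : ℤ) * cc i) + ∑ i ∈ A, cc i := by
          congr 1
          rw [show (∑ i, (chi A i : ℤ) * cc i) = ∑ i, (if i ∈ A then cc i else 0) from
            Finset.sum_congr rfl (fun i _ => by rw [hchi]; by_cases h : i ∈ A <;> simp [h])]
          rw [Finset.sum_ite_mem, Finset.univ_inter]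
  have chi_cancel : ∀ (k : Fin d → ℕ) (A : Finset (Fin d)), (∀ i ∈ A, 1 ≤ k i) →
      (fun i => (k i - chi A i) + chi A i) = k := by
    intro k A hk
    funext i
    by_cases h : i ∈ A
    · have := hk i h
      rw [hchi]
      simp only [if_pos h]
      omega
    · rw [hchi]
      simp only [if_neg h]
      omega
  -- step 1: shifted counts
  have hstep1 : ∀ (b : ℕ) (a : ℤ) (A : Finset (Fin d)),
      (if (∑ i ∈ A, bb i) ≤ b
        then ((Kset (b - ∑ i ∈ A, bb i) (a - ∑ i ∈ A, cc i)).card : ℤ) else 0)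
      = (((Kset b a).filter (fun pk => ∀ i ∈ A, 1 ≤ pk.2 i)).card : ℤ) := by
    intro b a A
    by_cases hA : (∑ i ∈ A, bb i) ≤ b
    · rw [if_pos hA]
      have hcards : (Kset (b - ∑ i ∈ A, bb i) (a - ∑ i ∈ A, cc i)).card
          = ((Kset b a).filter (fun pk => ∀ i ∈ A, 1 ≤ pk.2 i)).card := by
        refine Finset.card_bij'
          (fun (pk : (M →+ ℕ) × (Fin d → ℕ)) _ => (pk.1, fun i => pk.2 i + chi A i))
          (fun (pk : (M →+ ℕ) × (Fin d → ℕ)) _ => (pk.1, fun i => pk.2 i - chi A i))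
          ?hi ?hj ?li ?ri
        case hi =>
          intro pk hpk
          rw [mem_Kset] at hpk
          obtain ⟨h1, h2, h3⟩ := hpk
          rw [Finset.mem_filter]
          constructor
          · rw [mem_Kset]
            refine ⟨h1, ?_, ?_⟩
            · show pk.1 n + ∑ i, (pk.2 i + chi A i) * bb i = b
              rw [chi_sum_nat]
              omega
            · show Av pk.1 + ∑ i, ((pk.2 i + chi A i : ℕ) : ℤ) * cc i = a
              rw [chi_sum_int]
              linarith
          · intro i hi
            show 1 ≤ pk.2 i + chi A i
            rw [hchi]
            simp [if_pos hi]
        case hj =>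
          intro pk hpk
          rw [Finset.mem_filter, mem_Kset] at hpk
          obtain ⟨⟨h1, h2, h3⟩, h4⟩ := hpk
          have hc := chi_cancel pk.2 A h4
          have hnat : (∑ i, (pk.2 i - chi A i) * bb i) + ∑ i ∈ A, bb i
              = ∑ i, pk.2 i * bb i := by
            rw [← chi_sum_nat (fun i => pk.2 i - chi A i) A]
            exact Finset.sum_congr rfl (fun i _ => by rw [congrFun hc i])
          have hint : (∑ i, ((pk.2 i - chi A i : ℕ) : ℤ) * cc i) + ∑ i ∈ A, cc i
              = ∑ i, (pk.2 i : ℤ) * cc i := by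
            rw [← chi_sum_int (fun i => pk.2 i - chi A i) A]
            exact Finset.sum_congr rfl (fun i _ => by rw [congrFun hc i])
          rw [mem_Kset]
          refine ⟨h1, ?_, ?_⟩
          · show pk.1 n + ∑ i, (pk.2 i - chi A i) * bb i = b - ∑ i ∈ A, bb i
            omega
          · show Av pk.1 + ∑ i, ((pk.2 i - chi A i : ℕ) : ℤ) * cc i = a - ∑ i ∈ A, cc i
            linarith
        case li =>
          intro pk hpk
          apply Prod.ext
          · rfl
          · funext i
            show (pk.2 i + chi A i) - chi A i = pk.2 i
            omega
        case ri =>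
          intro pk hpk
          rw [Finset.mem_filter] at hpk
          have h4 := hpk.2
          apply Prod.ext
          · rfl
          · funext i
            show (pk.2 i - chi A i) + chi A i = pk.2 i
            exact congrFun (chi_cancel pk.2 A h4) i
      exact_mod_cast hcards
    · rw [if_neg hA]
      have hempty : (Kset b a).filter (fun pk => ∀ i ∈ A, 1 ≤ pk.2 i) = ∅ := by
        rw [Finset.filter_eq_empty_iff]
        intro pk hpk hone
        rw [mem_Kset] at hpk
        have h1 : ∑ i ∈ A, bb i ≤ ∑ i, pk.2 i * bb i := by
          calc ∑ i ∈ A, bb i ≤ ∑ i ∈ A, pk.2 i * bb i :=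
              Finset.sum_le_sum (fun i hi => Nat.le_mul_of_pos_left _ (hone i hi))
            _ ≤ ∑ i, pk.2 i * bb i :=
              Finset.sum_le_sum_of_subset (Finset.subset_univ A)
        have h2 := hpk.2.1
        omega
      rw [hempty]
      simp
  -- inner alternating sum
  have hinner : ∀ k : Fin d → ℕ,
      (∑ A ∈ (Finset.univ : Finset (Fin d)).powerset,
        (-1:ℤ)^A.card * (if ∀ i ∈ A, 1 ≤ k i then 1 else 0))
      = (if k = 0 then 1 else 0) := by
    intro k
    set kpos : Finset (Fin d) := Finset.univ.filter (fun i => 1 ≤ k i) with hkpos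
    have hiff : ∀ A : Finset (Fin d), (∀ i ∈ A, 1 ≤ k i) ↔ A ⊆ kpos := by
      intro A
      constructor
      · intro h i hi
        exact Finset.mem_filter.mpr ⟨Finset.mem_univ i, h i hi⟩
      · intro h i hi
        exact (Finset.mem_filter.mp (h hi)).2
    have h1 : ∀ A ∈ (Finset.univ : Finset (Fin d)).powerset,
        (-1:ℤ)^A.card * (if ∀ i ∈ A, 1 ≤ k i then 1 else 0)
        = if A ⊆ kpos then (-1:ℤ)^A.card else 0 := by
      intro A _
      by_cases hsub : A ⊆ kpos
      · rw [if_pos ((hiff A).mpr hsub), if_pos hsub, mul_one]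
      · rw [if_neg (fun hh => hsub ((hiff A).mp hh)), if_neg hsub, mul_zero]
    rw [Finset.sum_congr rfl h1, ← Finset.sum_filter]
    have h2 : (Finset.univ : Finset (Fin d)).powerset.filter (fun A => A ⊆ kpos)
        = kpos.powerset := by
      ext A
      simp [Finset.mem_powerset, Finset.mem_filter, Finset.subset_univ]
    rw [h2, Finset.sum_powerset_neg_one_pow_card]
    have h3 : kpos = ∅ ↔ k = 0 := by
      constructor
      · intro h
        funext i
        simp only [Pi.zero_apply]
        by_contra hne
        have hmem : i ∈ kpos := Finset.mem_filter.mpr ⟨Finset.mem_univ i, by omega⟩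
        rw [h] at hmem
        exact absurd hmem (Finset.notMem_empty i)
      · intro h
        rw [hkpos, h]
        simp
    by_cases hk : k = 0
    · rw [if_pos (h3.mpr hk), if_pos hk]
    · rw [if_neg (fun hh => hk (h3.mp hh)), if_neg hk]
  -- expansion of the product
  have hexp : (∏ i, (1 - LTmonomial (cc i) (bb i)))
      = ∑ A ∈ (Finset.univ : Finset (Fin d)).powerset,
          ((-1 : ℤ) ^ A.card) • LTmonomial (∑ i ∈ A, cc i) (∑ i ∈ A, bb i) := by
    rw [show (∏ i, (1 - LTmonomial (cc i) (bb i)))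
        = ∏ i, ((fun i => - LTmonomial (cc i) (bb i)) i + (fun _ => (1:PowerSeries RL)) i) from
      Finset.prod_congr rfl (fun i _ => by simp [sub_eq_neg_add])]
    rw [Finset.prod_add]
    refine Finset.sum_congr rfl (fun A hA => ?_)
    rw [Finset.prod_const_one, mul_one]
    rw [Finset.prod_congr rfl
      (fun i (_ : i ∈ A) => (neg_one_mul (LTmonomial (cc i) (bb i))).symm)]
    rw [Finset.prod_mul_distrib, Finset.prod_const, prod_LT]
    rw [zsmul_eq_mul]
    push_cast
    ring
  -- the main identity
  have hmain : F * (∏ i, (1 - LTmonomial (cc i) (bb i)))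
      = ∑ p ∈ Pfin, LTmonomial (Av p) (p n) := by
    apply PowerSeries.ext
    intro b
    apply HahnSeries.ext
    funext a
    rw [show ((PowerSeries.coeff b) (F * ∏ i, (1 - LTmonomial (cc i) (bb i)))).coeff a
        = coeff2 b a (F * ∏ i, (1 - LTmonomial (cc i) (bb i))) from rfl]
    rw [show ((PowerSeries.coeff b) (∑ p ∈ Pfin, LTmonomial (Av p) (p n))).coeff a
        = coeff2 b a (∑ p ∈ Pfin, LTmonomial (Av p) (p n)) from rfl]
    rw [hexp, Finset.mul_sum]
    rw [map_sum, map_sum]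
    have hterm : ∀ A ∈ (Finset.univ : Finset (Fin d)).powerset,
        coeff2 b a (F * (((-1:ℤ)^A.card) • LTmonomial (∑ i ∈ A, cc i) (∑ i ∈ A, bb i)))
        = (-1:ℤ)^A.card *
            (((Kset b a).filter (fun pk => ∀ i ∈ A, 1 ≤ pk.2 i)).card : ℤ) := by
      intro A _
      rw [mul_smul_comm, map_zsmul, smul_eq_mul]
      congr 1
      calc coeff2 b a (F * LTmonomial (∑ i ∈ A, cc i) (∑ i ∈ A, bb i))
          = (if (∑ i ∈ A, bb i) ≤ b
              then ((PowerSeries.coeff (b - ∑ i ∈ A, bb i)) F).coeff (a - ∑ i ∈ A, cc i)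
              else 0) := coeff_mul_LT F _ _ b a
        _ = (if (∑ i ∈ A, bb i) ≤ b
              then ((Kset (b - ∑ i ∈ A, bb i) (a - ∑ i ∈ A, cc i)).card : ℤ) else 0) := by
            by_cases h : (∑ i ∈ A, bb i) ≤ b
            · rw [if_pos h, if_pos h, hFcoeff]
            · rw [if_neg h, if_neg h]
        _ = _ := hstep1 b a A
    rw [Finset.sum_congr rfl hterm]
    have hrhs : ∀ p ∈ Pfin, coeff2 b a (LTmonomial (Av p) (p n))
        = if b = p n ∧ a = Av p then (1:ℤ) else 0 := fun p _ => coeff_LT _ _ _ _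
    rw [Finset.sum_congr rfl hrhs, Finset.sum_boole]
    have hswap : ∑ A ∈ (Finset.univ : Finset (Fin d)).powerset,
        (-1:ℤ)^A.card * (((Kset b a).filter fun pk => ∀ i ∈ A, 1 ≤ pk.2 i).card : ℤ)
        = ∑ pk ∈ Kset b a, (if pk.2 = 0 then (1:ℤ) else 0) := by
      have h1 : ∀ A ∈ (Finset.univ : Finset (Fin d)).powerset,
          (-1:ℤ)^A.card * (((Kset b a).filter fun pk => ∀ i ∈ A, 1 ≤ pk.2 i).card : ℤ)
          = ∑ pk ∈ Kset b a, (-1:ℤ)^A.card * (if ∀ i ∈ A, 1 ≤ pk.2 i then 1 else 0) := by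
        intro A _
        rw [show ((((Kset b a).filter fun pk => ∀ i ∈ A, 1 ≤ pk.2 i).card : ℤ))
            = ∑ pk ∈ Kset b a, (if ∀ i ∈ A, 1 ≤ pk.2 i then (1:ℤ) else 0) from
          (Finset.sum_boole _ _).symm]
        rw [Finset.mul_sum]
      rw [Finset.sum_congr rfl h1, Finset.sum_comm]
      exact Finset.sum_congr rfl (fun pk _ => hinner pk.2)
    rw [hswap, Finset.sum_boole]
    have hfinal : ((Kset b a).filter fun pk => pk.2 = 0).card
        = (Pfin.filter fun p => b = p n ∧ a = Av p).card := by
      refine Finset.card_bij'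
        (fun (pk : (M →+ ℕ) × (Fin d → ℕ)) _ => pk.1)
        (fun (p : M →+ ℕ) _ => (p, fun _ => 0))
        ?hi ?hj ?li ?ri
      case hi =>
        intro pk hpk
        rw [Finset.mem_filter, mem_Kset] at hpk
        obtain ⟨⟨h1, h2, h3⟩, h4⟩ := hpk
        rw [Finset.mem_filter]
        refine ⟨h1, ?_, ?_⟩
        · show b = pk.1 n
          have hz : ∑ i, pk.2 i * bb i = 0 := by simp [h4]
          omega
        · show a = Av pk.1
          have hz : ∑ i, (pk.2 i : ℤ) * cc i = 0 := by simp [h4]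
          linarith
      case hj =>
        intro p hp
        rw [Finset.mem_filter] at hp
        obtain ⟨h1, h2, h3⟩ := hp
        rw [Finset.mem_filter, mem_Kset]
        refine ⟨⟨h1, ?_, ?_⟩, rfl⟩
        · show p n + ∑ i, 0 * bb i = b
          simp [h2.symm]
        · show Av p + ∑ i, ((0 : ℕ) : ℤ) * cc i = a
          simp [h3.symm]
      case li =>
        intro pk hpk
        rw [Finset.mem_filter] at hpk
        show ((pk.1, fun _ => 0) : (M →+ ℕ) × (Fin d → ℕ)) = pk
        have h4 := hpk.2
        exact Prod.ext rfl (by rw [h4]; funext i; rfl)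
      case ri =>
        intro p hp
        rfl
    exact_mod_cast hfinal
  -- conclusion
  refine ⟨Pfin, hPfin.coe_toFinset, hUnit, F, hFlds, ?_⟩
  have hUnit' : ∀ i : Fin d, IsUnit (1 - LTmonomial (cc i) (bb i)) := hUnit
  have hprodinv : (∏ i, (1 - LTmonomial (cc i) (bb i))) *
      (∏ i : Fin d, Ring.inverse (1 - LTmonomial (cc i) (bb i))) = 1 := by
    rw [← Finset.prod_mul_distrib]
    rw [Finset.prod_congr rfl (fun i _ => Ring.mul_inverse_cancel _ (hUnit' i))]
    exact Finset.prod_const_one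
  calc F = F * 1 := (mul_one F).symm
    _ = F * ((∏ i, (1 - LTmonomial (cc i) (bb i))) *
        ∏ i : Fin d, Ring.inverse (1 - LTmonomial (cc i) (bb i))) := by rw [hprodinv]
    _ = (F * ∏ i, (1 - LTmonomial (cc i) (bb i))) *
        ∏ i : Fin d, Ring.inverse (1 - LTmonomial (cc i) (bb i)) := by ring
    _ = (∑ p ∈ Pfin, LTmonomial (Av p) (p n)) *
        ∏ i : Fin d, Ring.inverse (1 - LTmonomial (cc i) (bb i)) := by rw [hmain]
end

section
/- Let M be a sharp, fine and saturated monoid of dimension d whose dual monoid M^∨ = Hom(M, ℕ) is simplicial: it has exactly d one-dimensional faces, whose generators u_1, …, u_d are linearly independent in Hom(M^gp, ℤ) ⊗ ℚ and rationally generate the cone of M^∨ (every element of M^∨ is a non-negative rational linear combination of u_1, …, u_d). Let P = {λ_1 u_1 + ⋯ + λ_d u_d ∈ M^{∨,loc} : λ_i ∈ ℚ, 0 < λ_i ≤ 1} be the fundamental parallelepiped. Then every local morphism u ∈ M^{∨,loc} can be written uniquely in the form u = p + a_1 u_1 + ⋯ + a_d u_d with p ∈ P and a_1, …, a_d ∈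 ℕ. -/
/-- Let `M` be a sharp, fine and saturated monoid of dimension `d` whose dual `M^∨` is
simplicial: it has exactly `d` one-dimensional faces, with generators `u 1, …, u d` that are
`ℚ`-linearly independent and rationally generate the cone of `M^∨`.  Then every local
morphism `v ∈ M^{∨,loc}` can be written uniquely as `v = p + a₁ • u 1 + ⋯ + a_d • u d` with
`p` in the fundamental parallelepiped `P` and `a i ∈ ℕ`. -/
theorem local_decomposition_parallelepiped (M : Type*) [AddCancelCommMonoid M]
    [AddMonoid.FG M]
    (hsharp : ∀ x : M, IsAddUnit x → x = 0) (hsat : IsSaturatedAddMonoid M)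
    (d : ℕ) (hdim : Nonempty (GrpOf M ≃+ (Fin d → ℤ)))
    (u : Fin d → (M →+ ℕ)) (hinj : Function.Injective u)
    (hfaces : ∀ F : AddSubmonoid (M →+ ℕ),
      IsOneDimFace F ↔ ∃ i : Fin d, F = AddSubmonoid.multiples (u i))
    (hindep : ∀ lam : Fin d → ℚ, (∀ x : M, ∑ i, lam i * (u i x : ℚ) = 0) → lam = 0)
    (hgen : ∀ v : M →+ ℕ, ∃ lam : Fin d → ℚ, (∀ i, 0 ≤ lam i) ∧
      ∀ x : M, (v x : ℚ) = ∑ i, lam i * (u i x : ℚ)) :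
    ∀ v : M →+ ℕ, IsLocalAddHom v →
      ∃! pa : (M →+ ℕ) × (Fin d → ℕ), pa.1 ∈ fundamentalPara u ∧
        v = pa.1 + ∑ i : Fin d, pa.2 i • u i := by
    classical
  -- uniqueness of rational coefficients
  have huniq : ∀ lam mu : Fin d → ℚ,
      (∀ x : M, ∑ i, lam i * (u i x : ℚ) = ∑ i, mu i * (u i x : ℚ)) → lam = mu := by
    intro lam mu h
    have h0 : lam - mu = 0 := by
      apply hindep
      intro x
      have hx := h x
      simp only [Pi.sub_apply, sub_mul, Finset.sum_sub_distrib]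
      linarith
    funext i
    have := congrFun h0 i
    simpa [sub_eq_zero] using this
  -- positivity of the coefficients of a local morphism
  have hpos : ∀ (v : M →+ ℕ), IsLocalAddHom v → ∀ lam : Fin d → ℚ,
      (∀ i, 0 ≤ lam i) → (∀ x : M, (v x : ℚ) = ∑ i, lam i * (u i x : ℚ)) →
      ∀ i, 0 < lam i := by
    intro v hv lam hlam0 hlamv i
    obtain ⟨S, hS⟩ : ∃ S : Finset M, AddSubmonoid.closure (S : Set M) = ⊤ :=
      AddMonoid.FG.fg_top
    set k : ℕ := S.sup (fun s => u i s) with hk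
    have hkb : ∀ x : M, u i x ≤ k * v x := by
      intro x
      have hx : x ∈ AddSubmonoid.closure (S : Set M) := by rw [hS]; trivial
      induction hx using AddSubmonoid.closure_induction with
      | mem s hs =>
        by_cases hvs : v s = 0
        · have hs0 : s = 0 := by
            apply hsharp
            by_contra hns
            exact hv s hns hvs
          simp [hs0]
        · have h1 : u i s ≤ k := Finset.le_sup hs
          have h2 : 1 ≤ v s := Nat.one_le_iff_ne_zero.mpr hvs
          calc u i s ≤ k := h1
            _ ≤ k * v s := Nat.le_mul_of_pos_right _ (by omega)
      | zero => simp
      | add a b _ _ ha hb => simp only [map_add, Nat.mul_add]; omega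
    set w : M →+ ℕ :=
      { toFun := fun x => k * v x - u i x
        map_zero' := by simp
        map_add' := fun x y => by
          have h1 := hkb x; have h2 := hkb y
          simp only [map_add, Nat.mul_add]; omega } with hw
    have hwx : ∀ x : M, (w x : ℚ) = (k : ℚ) * v x - u i x := by
      intro x
      have h1 := hkb x
      show ((k * v x - u i x : ℕ) : ℚ) = _
      push_cast [h1]
      ring
    obtain ⟨nu, hnu0, hnu⟩ := hgen w
    have hkey : (fun j => (k : ℚ) * lam j) =
        fun j => (if j = i then 1 else 0) + nu j := by
      apply huniq
      intro x
      have e1 : ∑ j, ((k : ℚ) * lam j) * (u j x : ℚ) = (k : ℚ) * (v x : ℚ) := by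
        rw [hlamv x, Finset.mul_sum]
        exact Finset.sum_congr rfl fun j _ => by ring
      have e2 : ∑ j, ((if j = i then 1 else 0) + nu j) * (u j x : ℚ)
          = (u i x : ℚ) + (w x : ℚ) := by
        rw [hnu x]
        simp only [add_mul, Finset.sum_add_distrib, ite_mul, one_mul, zero_mul]
        rw [Finset.sum_ite_eq' Finset.univ i (fun j => (u j x : ℚ))]
        simp
      rw [e1, e2, hwx x]
      ring
    have hki : (k : ℚ) * lam i = (if i = i then 1 else 0) + nu i := congrFun hkey i
    rw [if_pos rfl] at hki
    have hnui := hnu0 i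
    have hl := hlam0 i
    by_contra hle0
    push_neg at hle0
    have hk0 : (0 : ℚ) ≤ (k : ℚ) := Nat.cast_nonneg _
    nlinarith [hl, hnui, hki, hk0, hle0]
  -- main argument
  intro v hv
  obtain ⟨lam, hlam0, hlamv⟩ := hgen v
  have hlampos : ∀ i, 0 < lam i := hpos v hv lam hlam0 hlamv
  set a : Fin d → ℕ := fun i => (⌈lam i⌉ - 1).toNat with ha
  have hceil : ∀ i, (a i : ℚ) = (⌈lam i⌉ : ℚ) - 1 := by
    intro i
    have h1 : (1 : ℤ) ≤ ⌈lam i⌉ := Int.ceil_pos.mpr (hlampos i)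
    have h2 : ((⌈lam i⌉ - 1).toNat : ℤ) = ⌈lam i⌉ - 1 := Int.toNat_of_nonneg (by omega)
    have h2' : (a i : ℤ) = ⌈lam i⌉ - 1 := h2
    have h3 : ((a i : ℤ) : ℚ) = ((⌈lam i⌉ - 1 : ℤ) : ℚ) := by rw [h2']
    push_cast at h3 ⊢
    linarith
  set mu : Fin d → ℚ := fun i => lam i - a i with hmu
  have hmu01 : ∀ i, 0 < mu i ∧ mu i ≤ 1 := by
    intro i
    have h1 : lam i ≤ (⌈lam i⌉ : ℚ) := Int.le_ceil _
    have h2 : (⌈lam i⌉ : ℚ) < lam i + 1 := Int.ceil_lt_add_one _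
    constructor
    · rw [hmu]; simp only; rw [hceil i]; linarith
    · rw [hmu]; simp only; rw [hceil i]; linarith
  set Su : M →+ ℕ := ∑ i, a i • u i with hSu
  have hSapp : ∀ x : M, Su x = ∑ i, a i * u i x := by
    intro x; rw [hSu]; simp [AddMonoidHom.finset_sum_apply]
  have hle : ∀ x : M, Su x ≤ v x := by
    intro x
    have hq : (Su x : ℚ) ≤ (v x : ℚ) := by
      rw [hSapp x, hlamv x]
      push_cast
      apply Finset.sum_le_sum
      intro i _
      have h1 := (hmu01 i).1
      have h2 : (0 : ℚ) ≤ (u i x : ℚ) := Nat.cast_nonneg _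
      have h3 : (a i : ℚ) ≤ lam i := by
        have := (hmu01 i).1; rw [hmu] at this; simp only at this; linarith
      nlinarith
    exact_mod_cast hq
  set p : M →+ ℕ :=
    { toFun := fun x => v x - Su x
      map_zero' := by simp
      map_add' := fun x y => by
        have h1 := hle x; have h2 := hle y
        simp only [map_add]; omega } with hp
  have hpapp : ∀ x : M, (p x : ℚ) = ∑ i, mu i * (u i x : ℚ) := by
    intro x
    have h1 := hle x
    show ((v x - Su x : ℕ) : ℚ) = _
    rw [Nat.cast_sub h1, hlamv x]
    have h2 : (Su x : ℚ) = ∑ i, (a i : ℚ) * (u i x : ℚ) := by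
      rw [hSapp x]; push_cast; rfl
    rw [h2, ← Finset.sum_sub_distrib]
    exact Finset.sum_congr rfl fun i _ => by rw [hmu]; ring
  have hploc : IsLocalAddHom p := by
    intro x hx hpx
    have h0 : (p x : ℚ) = 0 := by rw [hpx]; simp
    rw [hpapp x] at h0
    have hterms : ∀ i ∈ Finset.univ, (0 : ℚ) ≤ mu i * (u i x : ℚ) := fun i _ => by
      have := (hmu01 i).1
      have : (0 : ℚ) ≤ (u i x : ℚ) := Nat.cast_nonneg _
      nlinarith [(hmu01 i).1, Nat.cast_nonneg (α := ℚ) (u i x)]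
    have hzero : ∀ i, (u i x : ℚ) = 0 := by
      intro i
      have := (Finset.sum_eq_zero_iff_of_nonneg hterms).mp h0 i (Finset.mem_univ i)
      have hmui := (hmu01 i).1
      rcases mul_eq_zero.mp this with h | h
      · exact absurd h (ne_of_gt hmui)
      · exact h
    have hvx : (v x : ℚ) = 0 := by
      rw [hlamv x]
      exact Finset.sum_eq_zero fun i _ => by rw [hzero i, mul_zero]
    exact hv x hx (by exact_mod_cast hvx)
  have hdecomp : v = p + Su := by
    ext x
    have h1 := hle x
    show v x = (v x - Su x) + Su x
    omega
  refine ⟨(p, a), ⟨⟨hploc, mu, hmu01, hpapp⟩, hdecomp⟩, ?_⟩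
  rintro ⟨q, b⟩ ⟨⟨hqloc, nu, hnu01, hq⟩, hbdec⟩
  -- coefficients of v in two ways
  have hcoef : (fun i => nu i + (b i : ℚ)) = fun i => mu i + (a i : ℚ) := by
    apply huniq
    intro x
    have hb : v x = q x + ∑ i, b i * u i x := by
      rw [hbdec]
      simp [AddMonoidHom.finset_sum_apply]
    have hbq : (v x : ℚ) = (q x : ℚ) + ∑ i, (b i : ℚ) * (u i x : ℚ) := by
      rw [hb]; push_cast; ring_nf
    have hvp : (v x : ℚ) = (p x : ℚ) + ∑ i, (a i : ℚ) * (u i x : ℚ) := by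
      rw [hlamv x, hpapp x, ← Finset.sum_add_distrib]
      exact Finset.sum_congr rfl fun i _ => by rw [hmu]; ring
    have e1 : ∑ i, (nu i + (b i : ℚ)) * (u i x : ℚ)
        = (q x : ℚ) + ∑ i, (b i : ℚ) * (u i x : ℚ) := by
      rw [hq x, ← Finset.sum_add_distrib]
      exact Finset.sum_congr rfl fun i _ => by ring
    have e2 : ∑ i, (mu i + (a i : ℚ)) * (u i x : ℚ)
        = (p x : ℚ) + ∑ i, (a i : ℚ) * (u i x : ℚ) := by
      rw [hpapp x, ← Finset.sum_add_distrib]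
      exact Finset.sum_congr rfl fun i _ => by ring
    rw [e1, e2, ← hbq, ← hvp]
  have hba : b = a := by
    funext i
    have hc : nu i + (b i : ℚ) = mu i + (a i : ℚ) := congrFun hcoef i
    have h1 := (hnu01 i).1; have h2 := (hnu01 i).2
    have h3 := (hmu01 i).1; have h4 := (hmu01 i).2
    have hlt1 : (b i : ℚ) < (a i : ℚ) + 1 := by linarith
    have hlt2 : (a i : ℚ) < (b i : ℚ) + 1 := by linarith
    have hn1 : b i < a i + 1 := by exact_mod_cast hlt1
    have hn2 : a i < b i + 1 := by exact_mod_cast hlt2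
    omega
  have hnumu : nu = mu := by
    funext i
    have hc : nu i + (b i : ℚ) = mu i + (a i : ℚ) := congrFun hcoef i
    have hab : (b i : ℚ) = (a i : ℚ) := by rw [hba]
    linarith
  have hqp : q = p := by
    ext x
    have h1 : (q x : ℚ) = (p x : ℚ) := by
      rw [hq x, hpapp x, hnumu]
    exact_mod_cast h1
  rw [hqp, hba]
end
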